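/- arXiv:1912.01688 — 7 statements merged into one kernel-verified Lean document; each statement's English description precedes it below -/
import Mathlib

section
/- Let t be a strictly increasing sequence of elements of [n] with complement u (in increasing order). For all i in [m] and j in [n-m], we have j ≥ t_i - i + 1 if and only if u_j ≥ j + i. -/
/-- Lemma 4.1(2): with `t` the strictly increasing list of taken spots in `[n]`
(1-indexed) and `u` the increasing enumeration of `[n] \ {t 1, …, t m}`
(1-indexed), for all `i ∈ [m]` and `j ∈ [n-m]` we have
`j ≥ t i - i + 1 ↔ u j ≥ j + i`. -/
theorem stmt1 (n m : ℕ) (t u : ℕ → ℕ)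
    (ht_mono : ∀ i j, 1 ≤ i → i < j → j ≤ m → t i < t j)
    (ht_mem : ∀ i, 1 ≤ i → i ≤ m → t i ∈ Finset.Icc 1 n)
    (hu_mono : ∀ i j, 1 ≤ i → i < j → j ≤ n - m → u i < u j)
    (hu_mem : ∀ j, 1 ≤ j → j ≤ n - m → u j ∈ Finset.Icc 1 n)
    (hcompl : ∀ x ∈ Finset.Icc 1 n,
      (∃ i, 1 ≤ i ∧ i ≤ m ∧ t i = x) ↔ ¬ ∃ j, 1 ≤ j ∧ j ≤ n - m ∧ u j = x) :
    ∀ i, 1 ≤ i → i ≤ m → ∀ j, 1 ≤ j → j ≤ n - m →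
      (t i - i + 1 ≤ j ↔ j + i ≤ u j) := by
  have ht_le : ∀ a b, 1 ≤ a → a ≤ b → b ≤ m → t a ≤ t b := by
    intro a b ha hab hbm
    rcases Nat.eq_or_lt_of_le hab with h | h
    · rw [h]
    · exact le_of_lt (ht_mono a b ha h hbm)
  have hu_le : ∀ a b, 1 ≤ a → a ≤ b → b ≤ n - m → u a ≤ u b := by
    intro a b ha hab hbm
    rcases Nat.eq_or_lt_of_le hab with h | h
    · rw [h]
    · exact le_of_lt (hu_mono a b ha h hbm)
  have ht_ge : ∀ k, 1 ≤ k → k ≤ m → k ≤ t k := by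
    intro k hk1 hkm
    induction k with
    | zero => omega
    | succ k ih =>
      rcases Nat.eq_or_lt_of_le hk1 with h | h
      · have hk0 : k = 0 := by omega
        subst hk0
        have := ht_mem 1 le_rfl (by omega)
        simp only [Finset.mem_Icc] at this
        simpa using this.1
      · have h1 : 1 ≤ k := by omega
        have h2 := ih h1 (by omega)
        have h3 := ht_mono k (k + 1) h1 (by omega) hkm
        omega
  intro i hi1 him j hj1 hjm
  have hti := ht_ge i hi1 him
  have htin := ht_mem i hi1 him
  have hujn := hu_mem j hj1 hjm
  simp only [Finset.mem_Icc] at htin hujn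
  constructor
  · -- forward: t i - i + 1 ≤ j → j + i ≤ u j
    intro h1
    by_contra h2
    push_neg at h2
    set A := (Finset.Icc 1 i).image t with hA
    set B := (Finset.Icc 1 j).image u with hB
    have hAcard : A.card = i := by
      rw [hA, Finset.card_image_of_injOn, Nat.card_Icc]
      · omega
      · intro a ha b hb hab
        simp only [Finset.coe_Icc, Set.mem_Icc] at ha hb
        by_contra hne
        rcases Nat.lt_or_ge a b with h | h
        · exact absurd hab (Nat.ne_of_lt (ht_mono a b ha.1 h (le_trans hb.2 him)))
        · have : b < a := by omega
          exact absurd hab.symm (Nat.ne_of_lt (ht_mono b a hb.1 this (le_trans ha.2 him)))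
    have hBcard : B.card = j := by
      rw [hB, Finset.card_image_of_injOn, Nat.card_Icc]
      · omega
      · intro a ha b hb hab
        simp only [Finset.coe_Icc, Set.mem_Icc] at ha hb
        by_contra hne
        rcases Nat.lt_or_ge a b with h | h
        · exact absurd hab (Nat.ne_of_lt (hu_mono a b ha.1 h (le_trans hb.2 hjm)))
        · have : b < a := by omega
          exact absurd hab.symm (Nat.ne_of_lt (hu_mono b a hb.1 this (le_trans ha.2 hjm)))
    have hdisj : Disjoint A B := by
      rw [Finset.disjoint_left]
      intro x hxA hxB
      simp only [hA, hB, Finset.mem_image, Finset.mem_Icc] at hxA hxB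
      obtain ⟨a, ha, hax⟩ := hxA
      obtain ⟨b, hb, hbx⟩ := hxB
      have hxn : x ∈ Finset.Icc 1 n := by
        rw [← hax]
        exact ht_mem a ha.1 (le_trans ha.2 him)
      have := (hcompl x hxn).mp ⟨a, ha.1, le_trans ha.2 him, hax⟩
      exact this ⟨b, hb.1, le_trans hb.2 hjm, hbx⟩
    have hsub : A ∪ B ⊆ Finset.Icc 1 (j + i - 1) := by
      intro x hx
      rcases Finset.mem_union.mp hx with hx1 | hx1
      · simp only [hA, Finset.mem_image, Finset.mem_Icc] at hx1
        obtain ⟨a, ha, hax⟩ := hx1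
        have h3 := ht_le a i ha.1 ha.2 him
        have h4 := ht_mem a ha.1 (le_trans ha.2 him)
        simp only [Finset.mem_Icc] at h4 ⊢
        omega
      · simp only [hB, Finset.mem_image, Finset.mem_Icc] at hx1
        obtain ⟨b, hb, hbx⟩ := hx1
        have h3 := hu_le b j hb.1 hb.2 hjm
        have h4 := hu_mem b hb.1 (le_trans hb.2 hjm)
        simp only [Finset.mem_Icc] at h4 ⊢
        omega
    have := Finset.card_le_card hsub
    rw [Finset.card_union_of_disjoint hdisj, hAcard, hBcard, Nat.card_Icc] at this
    omega
  · -- backward: j + i ≤ u j → t i - i + 1 ≤ j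
    intro h2
    by_contra h1
    push_neg at h1
    -- so t i ≥ j + i
    have hti2 : j + i ≤ t i := by omega
    set A := (Finset.Icc 1 (i - 1)).image t with hA
    set B := (Finset.Icc 1 (j - 1)).image u with hB
    have hsub : Finset.Icc 1 (j + i - 1) ⊆ A ∪ B := by
      intro x hx
      simp only [Finset.mem_Icc] at hx
      have hxn : x ∈ Finset.Icc 1 n := by
        simp only [Finset.mem_Icc]
        omega
      rw [Finset.mem_union]
      by_cases ht : ∃ k, 1 ≤ k ∧ k ≤ m ∧ t k = x
      · obtain ⟨k, hk1, hkm, hkx⟩ := ht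
        left
        have hki : k < i := by
          by_contra hki
          push_neg at hki
          have := ht_le i k hi1 hki hkm
          omega
        simp only [hA, Finset.mem_image, Finset.mem_Icc]
        exact ⟨k, ⟨hk1, by omega⟩, hkx⟩
      · have hu : ∃ l, 1 ≤ l ∧ l ≤ n - m ∧ u l = x := by
          by_contra hu
          exact ht ((hcompl x hxn).mpr hu)
        obtain ⟨l, hl1, hlm, hlx⟩ := hu
        right
        have hlj : l < j := by
          by_contra hlj
          push_neg at hlj
          have := hu_le j l hj1 hlj hlm
          omega
        simp only [hB, Finset.mem_image, Finset.mem_Icc]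
        exact ⟨l, ⟨hl1, by omega⟩, hlx⟩
    have hcount := Finset.card_le_card hsub
    have hAle : A.card ≤ i - 1 := by
      calc A.card ≤ (Finset.Icc 1 (i - 1)).card := Finset.card_image_le
        _ = i - 1 := by rw [Nat.card_Icc]; omega
    have hBle : B.card ≤ j - 1 := by
      calc B.card ≤ (Finset.Icc 1 (j - 1)).card := Finset.card_image_le
        _ = j - 1 := by rw [Nat.card_Icc]; omega
    have hunion := Finset.card_union_le A B
    rw [Nat.card_Icc] at hcount
    omega
end

section
/- A weakly increasing sequence (c_1,...,c_{n-m}) in [n]^{n-m} is an increasing parking completion of t if and only if c_i ≤ u_i for all i, where u is the increasing enumeration of the complement of t in [n]. -/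
private def cnt {k : ℕ} (f : Fin k → ℕ) (v : ℕ) : ℕ :=
  (Finset.univ.filter (fun i => f i ≤ v)).card

private lemma card_filter_lt (n k : ℕ) (h : k ≤ n) :
    ((Finset.univ : Finset (Fin n)).filter (fun i => i.1 < k)).card = k := by
  apply Finset.card_eq_of_bijective (fun i hi => ⟨i, lt_of_lt_of_le hi h⟩)
  · intro a ha
    simp only [Finset.mem_filter, Finset.mem_univ, true_and] at ha
    exact ⟨a.1, ha, rfl⟩
  · intro i hi
    simp [hi]
  · intro i j hi hj hij
    simpa using congrArg Fin.val hij

private lemma le_cnt_of_bound {n : ℕ} (b : Fin n → ℕ) (hb : ∀ i : Fin n, b i ≤ i.1 + 1)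
    (k : ℕ) (hk : k ≤ n) : k ≤ cnt b k := by
  have hsub : ((Finset.univ : Finset (Fin n)).filter (fun i => i.1 < k)) ⊆
      Finset.univ.filter (fun i => b i ≤ k) := by
    intro i hi
    simp only [Finset.mem_filter, Finset.mem_univ, true_and] at hi ⊢
    exact le_trans (hb i) hi
  have h2 := Finset.card_le_card hsub
  rw [card_filter_lt n k hk] at h2
  exact h2

private lemma bound_of_cnt {n : ℕ} (b : Fin n → ℕ) (hmono : Monotone b)
    (hcnt : ∀ k, 1 ≤ k → k ≤ n → k ≤ cnt b k) (i : Fin n) : b i ≤ i.1 + 1 := by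
  by_contra h
  push_neg at h
  have h2 : i.1 + 1 ≤ cnt b (i.1 + 1) := hcnt _ (Nat.le_add_left _ _) i.2
  have h3 : cnt b (i.1 + 1) ≤ i.1 := by
    have hsub : (Finset.univ.filter (fun j => b j ≤ i.1 + 1)) ⊆
        (Finset.univ : Finset (Fin n)).filter (fun j => j.1 < i.1) := by
      intro j hj
      simp only [Finset.mem_filter, Finset.mem_univ, true_and] at hj ⊢
      by_contra hji
      push_neg at hji
      have : b i ≤ b j := hmono (by exact hji)
      omega
    have h4 := Finset.card_le_card hsub
    rw [card_filter_lt n i.1 (le_of_lt i.2)] at h4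
    exact h4
  omega

private lemma cnt_le_iff {N n : ℕ} (u c : Fin N → ℕ) (hu : StrictMono u) (hc : Monotone c)
    (hu1 : ∀ j, u j ∈ Finset.Icc 1 n) :
    (∀ k, 1 ≤ k → k ≤ n → cnt u k ≤ cnt c k) ↔ ∀ i, c i ≤ u i := by
  constructor
  · intro h i
    by_contra hlt
    push_neg at hlt
    obtain ⟨hu1i, hu2i⟩ := Finset.mem_Icc.mp (hu1 i)
    have hk := h (u i) hu1i hu2i
    have h1 : i.1 + 1 ≤ cnt u (u i) := by
      have hsub : ((Finset.univ : Finset (Fin N)).filter (fun j => j.1 < i.1 + 1)) ⊆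
          Finset.univ.filter (fun j => u j ≤ u i) := by
        intro j hj
        simp only [Finset.mem_filter, Finset.mem_univ, true_and] at hj ⊢
        exact hu.monotone (by exact Nat.lt_succ_iff.mp hj)
      have h4 := Finset.card_le_card hsub
      rw [card_filter_lt N (i.1 + 1) i.2] at h4
      exact h4
    have h2 : cnt c (u i) ≤ i.1 := by
      have hsub : (Finset.univ.filter (fun j => c j ≤ u i)) ⊆
          (Finset.univ : Finset (Fin N)).filter (fun j => j.1 < i.1) := by
        intro j hj
        simp only [Finset.mem_filter, Finset.mem_univ, true_and] at hj ⊢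
        by_contra hji
        push_neg at hji
        have : c i ≤ c j := hc (by exact hji)
        omega
      have h4 := Finset.card_le_card hsub
      rw [card_filter_lt N i.1 (le_of_lt i.2)] at h4
      exact h4
    omega
  · intro h k _ _
    apply Finset.card_le_card
    intro j hj
    simp only [Finset.mem_filter, Finset.mem_univ, true_and] at hj ⊢
    exact le_trans (h j) hj

private lemma cnt_append {m p : ℕ} (t : Fin m → ℕ) (c : Fin p → ℕ) (v : ℕ) :
    cnt (Fin.append t c) v = cnt t v + cnt c v := by
  unfold cnt
  rw [Finset.card_filter, Finset.card_filter, Finset.card_filter, Fin.sum_univ_add]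
  simp [Fin.append_left, Fin.append_right]

private lemma cnt_comp_equiv {k l : ℕ} (e : Fin k ≃ Fin l) (f : Fin l → ℕ) (v : ℕ) :
    cnt (f ∘ e) v = cnt f v := by
  unfold cnt
  rw [Finset.card_filter, Finset.card_filter]
  exact Fintype.sum_equiv e _ _ (fun i => rfl)

private lemma tu_count {n m p : ℕ} (t : Fin m → ℕ) (u : Fin p → ℕ)
    (ht : StrictMono t) (hu : StrictMono u)
    (htm : ∀ i, t i ∈ Finset.Icc 1 n) (hum : ∀ j, u j ∈ Finset.Icc 1 n)
    (hcompl : ∀ x ∈ Finset.Icc 1 n, (∃ i, t i = x) ↔ ¬ ∃ j, u j = x)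
    (k : ℕ) (hk1 : 1 ≤ k) (hkn : k ≤ n) : cnt t k + cnt u k = k := by
  classical
  set A := (Finset.univ.filter (fun i => t i ≤ k)).image t with hA
  set B := (Finset.univ.filter (fun j => u j ≤ k)).image u with hB
  have hAcard : A.card = cnt t k := Finset.card_image_of_injective _ ht.injective
  have hBcard : B.card = cnt u k := Finset.card_image_of_injective _ hu.injective
  have hunion : A ∪ B = Finset.Icc 1 k := by
    ext x
    simp only [hA, hB, Finset.mem_union, Finset.mem_image, Finset.mem_filter, Finset.mem_univ,
      true_and, Finset.mem_Icc]
    constructor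
    · rintro (⟨i, hik, rfl⟩ | ⟨j, hjk, rfl⟩)
      · exact ⟨(Finset.mem_Icc.mp (htm i)).1, hik⟩
      · exact ⟨(Finset.mem_Icc.mp (hum j)).1, hjk⟩
    · rintro ⟨hx1, hxk⟩
      have hxn : x ∈ Finset.Icc 1 n := Finset.mem_Icc.mpr ⟨hx1, hxk.trans hkn⟩
      by_cases hx : ∃ i, t i = x
      · obtain ⟨i, rfl⟩ := hx; exact Or.inl ⟨i, hxk, rfl⟩
      · have hxu : ∃ j, u j = x := by
          by_contra hu'
          exact hx ((hcompl x hxn).mpr hu')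
        obtain ⟨j, rfl⟩ := hxu; exact Or.inr ⟨j, hxk, rfl⟩
  have hdisj : Disjoint A B := by
    rw [Finset.disjoint_left]
    rintro x hxA hxB
    simp only [hA, hB, Finset.mem_image, Finset.mem_filter, Finset.mem_univ, true_and] at hxA hxB
    obtain ⟨i, hik, rfl⟩ := hxA
    obtain ⟨j, hjk, hj⟩ := hxB
    exact ((hcompl _ (htm i)).mp ⟨i, rfl⟩) ⟨j, hj⟩
  have hcard := Finset.card_union_of_disjoint hdisj
  rw [hunion, Nat.card_Icc, hAcard, hBcard] at hcard
  omega

/-- A weakly increasing sequence `c ∈ [n]^{n-m}` is an increasing parking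
completion of the strictly increasing sequence `t` (i.e. the concatenation of
`t` and `c` has a weakly increasing rearrangement `b` with `b i ≤ i`, making it
a parking function) if and only if `c i ≤ u i` for all `i`, where `u` is the
increasing enumeration of `[n] \ {t i}`. -/
theorem stmt2 (n m : ℕ) (hmn : m ≤ n) (t : Fin m → ℕ) (u : Fin (n - m) → ℕ)
    (ht : StrictMono t) (htm : ∀ i, t i ∈ Finset.Icc 1 n)
    (hu : StrictMono u) (hum : ∀ j, u j ∈ Finset.Icc 1 n)
    (hcompl : ∀ x ∈ Finset.Icc 1 n, (∃ i, t i = x) ↔ ¬ ∃ j, u j = x)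
    (c : Fin (n - m) → ℕ) (hc : Monotone c) (hc1 : ∀ i, c i ∈ Finset.Icc 1 n) :
    (∃ σ : Equiv.Perm (Fin n),
        Monotone ((fun i : Fin n =>
          Fin.append t c (Fin.cast (by omega : n = m + (n - m)) i)) ∘ σ) ∧
        ∀ i : Fin n,
          Fin.append t c (Fin.cast (by omega : n = m + (n - m)) (σ i)) ≤ i.1 + 1) ↔
      ∀ i, c i ≤ u i := by
  have e : n = m + (n - m) := by omega
  set a : Fin n → ℕ := fun i => Fin.append t c (Fin.cast e i) with ha
  have hacnt : ∀ v, cnt a v = cnt t v + cnt c v := by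
    intro v
    have h1 : a = (Fin.append t c) ∘ (finCongr e) := rfl
    rw [h1, cnt_comp_equiv, cnt_append]
  constructor
  · rintro ⟨σ, _, hbound⟩
    rw [← cnt_le_iff u c hu hc hum]
    intro k hk1 hkn
    have hb : ∀ i : Fin n, (a ∘ σ) i ≤ i.1 + 1 := fun i => hbound i
    have h1 : k ≤ cnt (a ∘ σ) k := le_cnt_of_bound _ hb k hkn
    rw [cnt_comp_equiv σ a k, hacnt] at h1
    have h2 := tu_count t u ht hu htm hum hcompl k hk1 hkn
    omega
  · intro hcu
    refine ⟨Tuple.sort a, Tuple.monotone_sort a, ?_⟩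
    have hbound : ∀ i : Fin n, (a ∘ (Tuple.sort a)) i ≤ i.1 + 1 := by
      apply bound_of_cnt _ (Tuple.monotone_sort a)
      intro k hk1 hkn
      rw [cnt_comp_equiv (Tuple.sort a) a k, hacnt]
      have h2 := tu_count t u ht hu htm hum hcompl k hk1 hkn
      have h3 : cnt u k ≤ cnt c k := (cnt_le_iff u c hu hc hum).mpr hcu k hk1 hkn
      omega
    exact hbound
end

section
/- The maps Join and Split are mutually inverse bijections between the set of finite lists of increasing parking functions and the set of finite weakly increasing sequences of positive integers. -/
/-- An increasing parking function: a weakly increasing list `a` with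
`1 ≤ a i ≤ i` (1-indexed). -/
def IsIPF (a : List ℕ) : Prop :=
  a.Pairwise (· ≤ ·) ∧ ∀ i (h : i < a.length), 1 ≤ a.get ⟨i, h⟩ ∧ a.get ⟨i, h⟩ ≤ i + 1

/-- `Join`: concatenate a list of (increasing) parking functions, shifting the
`i`-th block up by `L (i-1) + i - 1`. -/
def Join : List (List ℕ) → List ℕ
  | [] => []
  | a :: A => a ++ (Join A).map (· + (a.length + 1))

open Classical in
/-- Fuel-driven implementation of `Split`: repeatedly remove the longest prefix
that is an increasing parking function and shift the remainder down by
(length of prefix) + 1.  On weakly increasing lists of positive integers the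
fuel `p.sum + 1` used in `Split` always suffices. -/
noncomputable def SplitAux : ℕ → List ℕ → List (List ℕ)
  | 0, _ => []
  | fuel + 1, p =>
    if p = [] then []
    else
      let k := Nat.findGreatest (fun k => IsIPF (p.take k)) p.length
      let q := p.drop k
      if q = [] then [p.take k]
      else p.take k :: SplitAux fuel (q.map (· - (k + 1)))

/-- `Split`, the inverse of `Join`. -/
noncomputable def Split (p : List ℕ) : List (List ℕ) :=
  SplitAux (p.sum + 1) p

lemma ipf_nil : IsIPF ([] : List ℕ) :=
  ⟨List.Pairwise.nil, fun i h => absurd h (by simp)⟩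

lemma ipf_mem {a : List ℕ} (h : IsIPF a) {x : ℕ} (hx : x ∈ a) : 1 ≤ x ∧ x ≤ a.length := by
  obtain ⟨i, hi, rfl⟩ := List.getElem_of_mem hx
  have := h.2 i hi
  simp only [List.get_eq_getElem] at this
  exact ⟨this.1, le_trans this.2 hi⟩

lemma sorted_getElem_le {l : List ℕ} (h : l.Pairwise (· ≤ ·)) {i j : ℕ} (hi : i ≤ j)
    (hj : j < l.length) : l[i]'(lt_of_le_of_lt hi hj) ≤ l[j] := by
  rcases eq_or_lt_of_le hi with rfl | h'
  · exact le_refl _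
  · exact List.pairwise_iff_getElem.1 h i j (by omega) hj h'

lemma map_sub_sum {q : List ℕ} {c : ℕ} (h : ∀ x ∈ q, c ≤ x) :
    (q.map (· - c)).sum + q.length * c = q.sum := by
  induction q with
  | nil => simp
  | cons x q ih =>
    simp only [List.map_cons, List.sum_cons, List.length_cons]
    have h1 := ih fun y hy => h y (List.mem_cons_of_mem _ hy)
    have h2 := h x (List.mem_cons_self)
    ring_nf
    omega

lemma map_add_sum (q : List ℕ) (c : ℕ) :
    (q.map (· + c)).sum = q.sum + q.length * c := by
  induction q with
  | nil => simp
  | cons x q ih => simp only [List.map_cons, List.sum_cons, List.length_cons, ih]; ring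

lemma map_sub_add {q : List ℕ} {c : ℕ} (h : ∀ x ∈ q, c ≤ x) :
    (q.map (· - c)).map (· + c) = q := by
  rw [List.map_map]; conv_rhs => rw [← List.map_id q]
  exact List.map_congr_left fun x hx => Nat.sub_add_cancel (h x hx)

lemma map_add_sub (q : List ℕ) (c : ℕ) : (q.map (· + c)).map (· - c) = q := by
  rw [List.map_map]; conv_rhs => rw [← List.map_id q]
  exact List.map_congr_left fun x _ => by simp

lemma sorted_map_sub {q : List ℕ} (c : ℕ) (h : q.Pairwise (· ≤ ·)) :
    (q.map (· - c)).Pairwise (· ≤ ·) :=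
  List.Pairwise.map _ (fun _ _ hab => Nat.sub_le_sub_right hab c) h

lemma sorted_map_add {q : List ℕ} (c : ℕ) (h : q.Pairwise (· ≤ ·)) :
    (q.map (· + c)).Pairwise (· ≤ ·) :=
  List.Pairwise.map _ (fun _ _ hab => Nat.add_le_add_right hab c) h

open Classical in
lemma step {p : List ℕ} (hs : p.Pairwise (· ≤ ·)) (hpos : ∀ x ∈ p, 1 ≤ x) :
    IsIPF (p.take (Nat.findGreatest (fun k => IsIPF (p.take k)) p.length)) ∧
    ∀ x ∈ p.drop (Nat.findGreatest (fun k => IsIPF (p.take k)) p.length),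
      Nat.findGreatest (fun k => IsIPF (p.take k)) p.length + 2 ≤ x := by
  set k := Nat.findGreatest (fun k => IsIPF (p.take k)) p.length with hk
  have hP0 : IsIPF (p.take 0) := by simpa using ipf_nil
  have hPk : IsIPF (p.take k) := by
    rw [hk]; exact Nat.findGreatest_spec (P := fun k => IsIPF (p.take k)) (Nat.zero_le _) hP0
  refine ⟨hPk, ?_⟩
  intro x hx
  have hkle : k ≤ p.length := Nat.findGreatest_le _
  have hklt : k < p.length := by
    by_contra h
    rw [List.drop_eq_nil_iff.2 (le_of_not_gt h)] at hx
    exact absurd hx (List.not_mem_nil (a := x))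
  have hpk : k + 2 ≤ p[k] := by
    by_contra hcon
    push_neg at hcon
    have hipf : IsIPF (p.take (k + 1)) := by
      refine ⟨List.Pairwise.sublist (List.take_sublist _ _) hs, ?_⟩
      intro i hi
      simp only [List.get_eq_getElem, List.getElem_take]
      have hi' : i < k + 1 := by simp only [List.length_take] at hi; omega
      have hilen : i < p.length := by omega
      constructor
      · exact hpos _ (List.getElem_mem _)
      · rcases lt_or_ge i k with h' | h'
        · have := hPk.2 i (by simp [List.length_take]; omega)
          simpa only [List.get_eq_getElem, List.getElem_take] using this.2
        · have hik : i = k := by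
            have := hi; simp [List.length_take] at this; omega
          subst hik; omega
    exact Nat.findGreatest_is_greatest (lt_add_one k) (by omega) hipf
  obtain ⟨j, hj, rfl⟩ := List.getElem_of_mem hx
  rw [List.getElem_drop]
  exact le_trans hpk (sorted_getElem_le hs (Nat.le_add_right k j) (by simp at hj; omega))


open Classical in
lemma splitAux_succ (fuel : ℕ) (p : List ℕ) (hp : p ≠ []) :
    SplitAux (fuel + 1) p =
      if p.drop (Nat.findGreatest (fun k => IsIPF (p.take k)) p.length) = []
      then [p.take (Nat.findGreatest (fun k => IsIPF (p.take k)) p.length)]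
      else p.take (Nat.findGreatest (fun k => IsIPF (p.take k)) p.length) ::
        SplitAux fuel ((p.drop (Nat.findGreatest (fun k => IsIPF (p.take k)) p.length)).map
          (· - (Nat.findGreatest (fun k => IsIPF (p.take k)) p.length + 1))) := by
  rw [SplitAux, if_neg hp]

open Classical in
lemma splitAux_fuel (n : ℕ) : ∀ p : List ℕ, p.sum ≤ n → ∀ f₁ f₂ : ℕ, p.sum < f₁ → p.sum < f₂ →
    p.Pairwise (· ≤ ·) → (∀ x ∈ p, 1 ≤ x) → SplitAux f₁ p = SplitAux f₂ p := by
  induction n using Nat.strong_induction_on with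
  | _ n ih =>
    intro p hpn f₁ f₂ hf₁ hf₂ hs hpos
    obtain ⟨g₁, rfl⟩ : ∃ g, f₁ = g + 1 := ⟨f₁ - 1, by omega⟩
    obtain ⟨g₂, rfl⟩ : ∃ g, f₂ = g + 1 := ⟨f₂ - 1, by omega⟩
    by_cases hp : p = []
    · subst hp; rw [SplitAux, SplitAux]; simp
    · rw [splitAux_succ _ _ hp, splitAux_succ _ _ hp]
      set k := Nat.findGreatest (fun k => IsIPF (p.take k)) p.length with hk
      by_cases hq : p.drop k = []
      · rw [if_pos hq, if_pos hq]
      · rw [if_neg hq, if_neg hq]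
        obtain ⟨hPk, hge⟩ := step hs hpos
        rw [← hk] at hPk hge
        have hge' : ∀ x ∈ p.drop k, k + 1 ≤ x := fun x hx => by have := hge x hx; omega
        have hsum : ((p.drop k).map (· - (k + 1))).sum + (p.drop k).length * (k + 1)
            = (p.drop k).sum := map_sub_sum hge'
        have hlen : 1 ≤ (p.drop k).length := List.length_pos_iff.2 hq
        have hsum2 : (p.drop k).sum ≤ p.sum := by
          have := List.sum_take_add_sum_drop p k; omega
        have hlt : ((p.drop k).map (· - (k + 1))).sum < p.sum := by
          nlinarith
        exact congrArg _ (ih (p.sum - 1) (by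
            have : 1 ≤ p.sum := by
              obtain ⟨x, hx⟩ := List.exists_mem_of_ne_nil p hp
              have := hpos x hx
              have := List.single_le_sum (fun y _ => Nat.zero_le y) x hx
              omega
            omega) _ (by omega) _ _ (by omega) (by omega)
          (sorted_map_sub _ (List.Pairwise.sublist (List.drop_sublist _ _) hs))
          (fun x hx => by
            obtain ⟨y, hy, rfl⟩ := List.mem_map.1 hx
            have := hge y hy; omega))

lemma split_ne_nil {p : List ℕ} (hp : p ≠ []) : Split p ≠ [] := by
  rw [Split, splitAux_succ _ _ hp]
  split <;> simp

lemma getLast?_cons_ne {α : Type*} (a : α) {l : List α} (hl : l ≠ []) :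
    (a :: l).getLast? = l.getLast? := by
  cases l with
  | nil => exact absurd rfl hl
  | cons b l => rfl

open Classical in
lemma dir1 (n : ℕ) : ∀ p : List ℕ, p.sum ≤ n → p.Pairwise (· ≤ ·) → (∀ x ∈ p, 1 ≤ x) →
    (∀ a ∈ Split p, IsIPF a) ∧ (Split p).getLast? ≠ some ([] : List ℕ) ∧
      Join (Split p) = p := by
  induction n using Nat.strong_induction_on with
  | _ n ih =>
    intro p hpn hs hpos
    by_cases hp : p = []
    · subst hp
      have : Split ([] : List ℕ) = [] := by rw [Split, SplitAux]; simp
      rw [this]; refine ⟨by simp, by simp, by simp [Join]⟩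
    · rw [Split, splitAux_succ _ _ hp]
      set k := Nat.findGreatest (fun k => IsIPF (p.take k)) p.length with hk
      obtain ⟨hPk, hge⟩ := step hs hpos
      rw [← hk] at hPk hge
      have hkle : k ≤ p.length := by rw [hk]; exact Nat.findGreatest_le _
      by_cases hq : p.drop k = []
      · rw [if_pos hq]
        have hkp : p.take k = p := by
          have : p.length ≤ k := List.drop_eq_nil_iff.1 hq
          rw [List.take_of_length_le this]
        rw [hkp]
        refine ⟨by simp [hPk, hkp ▸ hPk], by simpa using hp, by simp [Join]⟩
      · rw [if_neg hq]
        set q' := (p.drop k).map (· - (k + 1)) with hq'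
        have hq'sorted : q'.Pairwise (· ≤ ·) :=
          sorted_map_sub _ (List.Pairwise.sublist (List.drop_sublist _ _) hs)
        have hq'pos : ∀ x ∈ q', 1 ≤ x := fun x hx => by
          obtain ⟨y, hy, rfl⟩ := List.mem_map.1 hx
          have := hge y hy; omega
        have hge' : ∀ x ∈ p.drop k, k + 1 ≤ x := fun x hx => by have := hge x hx; omega
        have hsum : q'.sum + (p.drop k).length * (k + 1) = (p.drop k).sum := map_sub_sum hge'
        have hlen : 1 ≤ (p.drop k).length := List.length_pos_iff.2 hq
        have hsum2 : (p.drop k).sum ≤ p.sum := by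
          have := List.sum_take_add_sum_drop p k; omega
        have hq'lt : q'.sum < p.sum := by nlinarith
        have hfuel : SplitAux p.sum q' = Split q' := by
          rw [Split]
          exact splitAux_fuel q'.sum q' le_rfl _ _ (by omega) (by omega) hq'sorted hq'pos
        rw [hfuel]
        obtain ⟨ih1, ih2, ih3⟩ := ih q'.sum (by omega) q' le_rfl hq'sorted hq'pos
        have hklt : k < p.length := by
          by_contra h; exact hq (List.drop_eq_nil_iff.2 (by omega))
        have hsne : Split q' ≠ [] := split_ne_nil (by simp [hq', hq]; exact hklt)
        refine ⟨?_, ?_, ?_⟩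
        · intro a ha
          rcases List.mem_cons.1 ha with rfl | ha
          · exact hPk
          · exact ih1 a ha
        · rw [getLast?_cons_ne _ hsne]; exact ih2
        · show p.take k ++ (Join (Split q')).map (· + ((p.take k).length + 1)) = p
          rw [ih3, List.length_take, Nat.min_eq_left hkle, hq', map_sub_add hge',
            List.take_append_drop]

lemma join_ne_nil : ∀ A : List (List ℕ), A ≠ [] → A.getLast? ≠ some ([] : List ℕ) →
    Join A ≠ [] := by
  intro A
  induction A with
  | nil => intro h; exact absurd rfl h
  | cons a A ih =>
    intro _ hlast
    show a ++ (Join A).map (· + (a.length + 1)) ≠ []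
    cases A with
    | nil => simpa [Join] using hlast
    | cons b B =>
      have := ih (by simp) (by rwa [getLast?_cons_ne a (by simp)] at hlast)
      exact List.append_ne_nil_of_right_ne_nil _ (by simpa using this)

open Classical in
lemma dir2 : ∀ A : List (List ℕ), (∀ a ∈ A, IsIPF a) → A.getLast? ≠ some ([] : List ℕ) →
    (Join A).Pairwise (· ≤ ·) ∧ (∀ x ∈ Join A, 1 ≤ x) ∧ Split (Join A) = A := by
  intro A
  induction A with
  | nil =>
    intro _ _
    refine ⟨by simp [Join], by simp [Join], ?_⟩
    show Split [] = []
    rw [Split, SplitAux]; simp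
  | cons a A ih =>
    intro hipf hlast
    have ha : IsIPF a := hipf a (List.mem_cons_self)
    cases A with
    | nil =>
      have hane : a ≠ [] := by simpa using hlast
      have hJ : Join [a] = a := by simp [Join]
      rw [hJ]
      refine ⟨ha.1, fun x hx => (ipf_mem ha hx).1, ?_⟩
      rw [Split, splitAux_succ _ _ hane]
      have hkeq : Nat.findGreatest (fun k => IsIPF (a.take k)) a.length = a.length := by
        have h1 : a.length ≤ Nat.findGreatest (fun k => IsIPF (a.take k)) a.length :=
          Nat.le_findGreatest le_rfl (by simpa [List.take_of_length_le le_rfl] using ha)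
        have h2 := Nat.findGreatest_le (P := fun k => IsIPF (a.take k)) a.length
        omega
      rw [hkeq, if_pos (by simp), List.take_of_length_le le_rfl]
    | cons b B =>
      set A := b :: B with hA
      obtain ⟨ihs, ihpos, ihsplit⟩ := ih (fun c hc => hipf c (List.mem_cons_of_mem _ hc))
        (by rwa [getLast?_cons_ne a (by simp [hA])] at hlast)
      have hJne : Join A ≠ [] := join_ne_nil A (by simp [hA])
        (by rwa [getLast?_cons_ne a (by simp [hA])] at hlast)
      set c := a.length + 1 with hc
      set bl := (Join A).map (· + c) with hbl
      have hblne : bl ≠ [] := by simpa [hbl] using hJne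
      have hp : Join (a :: A) = a ++ bl := rfl
      have hblpos : ∀ x ∈ bl, c + 1 ≤ x := fun x hx => by
        obtain ⟨y, hy, rfl⟩ := List.mem_map.1 hx
        have := ihpos y hy; omega
      have hsorted : (a ++ bl).Pairwise (· ≤ ·) := by
        rw [List.pairwise_append]
        refine ⟨ha.1, sorted_map_add _ ihs, fun x hx y hy => ?_⟩
        have h1 := (ipf_mem ha hx).2
        have h2 := hblpos y hy
        omega
      have hpos : ∀ x ∈ a ++ bl, 1 ≤ x := by
        intro x hx
        rcases List.mem_append.1 hx with hx | hx
        · exact (ipf_mem ha hx).1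
        · have := hblpos x hx; omega
      refine ⟨hp ▸ hsorted, hp ▸ hpos, ?_⟩
      rw [hp, Split, splitAux_succ _ _ (List.append_ne_nil_of_right_ne_nil _ hblne)]
      set p := a ++ bl with hpdef
      have halen : a.length ≤ p.length := by simp [hpdef]
      have hkeq : Nat.findGreatest (fun k => IsIPF (p.take k)) p.length = a.length := by
        have h1 : a.length ≤ Nat.findGreatest (fun k => IsIPF (p.take k)) p.length :=
          Nat.le_findGreatest halen (by simpa [hpdef, List.take_left] using ha)
        rcases Nat.lt_or_ge a.length (Nat.findGreatest (fun k => IsIPF (p.take k)) p.length)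
          with hlt | hge
        · exfalso
          set k := Nat.findGreatest (fun k => IsIPF (p.take k)) p.length with hk
          have hkle : k ≤ p.length := by rw [hk]; exact Nat.findGreatest_le _
          have hPk : IsIPF (p.take k) := by
            rw [hk]
            exact Nat.findGreatest_spec (P := fun k => IsIPF (p.take k)) (Nat.zero_le _)
              (by simpa using ipf_nil)
          have hlen : a.length < (p.take k).length := by
            rw [List.length_take]; omega
          have := (hPk.2 a.length hlen).2
          simp only [List.get_eq_getElem, List.getElem_take] at this
          simp only [hpdef, List.getElem_append_right, le_refl, Nat.sub_self] at this
          have hbl0 : bl[0]'(List.length_pos_iff.2 hblne) ∈ bl := List.getElem_mem _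
          have := hblpos _ hbl0
          omega
        · omega
      rw [hkeq]
      have htake : p.take a.length = a := by rw [hpdef, List.take_left]
      have hdrop : p.drop a.length = bl := by rw [hpdef, List.drop_left]
      rw [htake, hdrop, if_neg hblne, hbl, map_add_sub]
      have hfuel : SplitAux p.sum (Join A) = Split (Join A) := by
        rw [Split]
        have hsum : p.sum = a.sum + ((Join A).sum + (Join A).length * c) := by
          rw [hpdef, List.sum_append, hbl, map_add_sum]
        have hlen1 : 1 ≤ (Join A).length := List.length_pos_iff.2 hJne
        have hmul : 1 * 1 ≤ (Join A).length * c := Nat.mul_le_mul hlen1 (by omega)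
        exact splitAux_fuel (Join A).sum _ le_rfl _ _ (by omega) (by omega) ihs ihpos
      rw [hfuel, ihsplit]

/-- `Join` and `Split` are mutually inverse bijections between finite lists of
increasing parking functions (taken with no trailing empty blocks, matching the
identification of lists differing by trailing empty parking functions) and
finite weakly increasing sequences of positive integers. -/
theorem stmt3 :
    (∀ p : List ℕ, p.Pairwise (· ≤ ·) → (∀ x ∈ p, 1 ≤ x) →
      (∀ a ∈ Split p, IsIPF a) ∧ (Split p).getLast? ≠ some ([] : List ℕ) ∧
        Join (Split p) = p) ∧
    (∀ A : List (List ℕ), (∀ a ∈ A, IsIPF a) → A.getLast? ≠ some ([] : List ℕ) →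
      (Join A).Pairwise (· ≤ ·) ∧ (∀ x ∈ Join A, 1 ≤ x) ∧ Split (Join A) = A) := by
  exact ⟨fun p hs hpos => dir1 p.sum p le_rfl hs hpos, dir2⟩
end

section
/- The number of parking completions of t = (t_1,...,t_m) in [n] equals the sum over all (ℓ_1,...,ℓ_{m+1}) ∈ N^{m+1} satisfying ℓ_1+...+ℓ_j ≥ t_j − j for all j ∈ [m] and ℓ_1+...+ℓ_{m+1} = n−m, of the multinomial coefficient binom(n−m; ℓ_1,...,ℓ_{m+1}) times the product over j of (ℓ_j+1)^{ℓ_j−1}. -/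
namespace PCaux
open Finset


variable {ι : Type} [Fintype ι]

/-- number of entries of `c` that are `≤ v`. -/
def cnt (c : ι → ℕ) (v : ℕ) : ℕ := #(univ.filter fun k => c k ≤ v)

lemma cnt_mono (c : ι → ℕ) : Monotone (cnt c) := fun v v' h => by
  apply card_le_card
  intro k hk
  simp only [mem_filter, mem_univ, true_and] at hk ⊢
  omega

lemma cnt_le_card (c : ι → ℕ) (v : ℕ) : cnt c v ≤ Fintype.card ι := by
  rw [← Finset.card_univ]
  exact card_le_card (filter_subset _ _)

lemma cnt_zero {c : ι → ℕ} (h : ∀ k, 1 ≤ c k) : cnt c 0 = 0 := by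
  simp only [cnt, card_eq_zero, filter_eq_empty_iff]
  intro k _
  have := h k; omega

lemma cnt_eq_card {c : ι → ℕ} {v : ℕ} (h : ∀ k, c k ≤ v) : cnt c v = Fintype.card ι := by
  simp only [cnt, Fintype.card]
  congr 1
  exact filter_true_of_mem (fun k _ => h k)

lemma cnt_all {c : ι → ℕ} {v : ℕ} (h : cnt c v = Fintype.card ι) (k : ι) : c k ≤ v := by
  by_contra hc
  have : (univ.filter fun k => c k ≤ v) ⊂ univ := by
    refine Finset.ssubset_iff_of_subset (filter_subset _ _) |>.2 ⟨k, mem_univ _, by simp [hc]⟩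
  have := card_lt_card this
  rw [cnt, ← Finset.card_univ] at h
  omega

lemma cnt_split (c : ι → ℕ) {a B : ℕ} (h : a ≤ B) :
    cnt c a + #(univ.filter fun k => a < c k ∧ c k ≤ B) = cnt c B := by
  classical
  rw [cnt, cnt, ← card_union_of_disjoint]
  · congr 1
    ext k
    simp only [mem_union, mem_filter, mem_univ, true_and]
    omega
  · rw [disjoint_left]
    intro k hk hk'
    simp only [mem_filter] at hk hk'
    omega

lemma cnt_lt_of_val {c : ι → ℕ} {k : ι} {w : ℕ} (hk : c k = w) (hw : 1 ≤ w) :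
    cnt c (w - 1) < cnt c w := by
  apply card_lt_card
  constructor
  · intro k' hk'
    simp only [mem_filter, mem_univ, true_and] at hk' ⊢
    omega
  · intro hsub
    have := hsub (by simp [hk] : k ∈ univ.filter fun k' => c k' ≤ w)
    simp [hk] at this
    omega

lemma downset_mem_iff {μ : ℕ} {p : Fin μ → Prop} [DecidablePred p]
    (hp : ∀ i j : Fin μ, i ≤ j → p j → p i) (i : Fin μ) :
    p i ↔ i.1 < #(univ.filter fun j => p j) := by
  constructor
  · intro hpi
    have hsub : Finset.Iic i ⊆ univ.filter fun j => p j := by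
      intro j hj
      simp only [Finset.mem_Iic] at hj
      simp only [mem_filter, mem_univ, true_and]
      exact hp j i hj hpi
    have := card_le_card hsub
    rw [Fin.card_Iic] at this
    omega
  · intro hlt
    by_contra hpi
    have hsub : (univ.filter fun j => p j) ⊆ Finset.Iio i := by
      intro j hj
      simp only [mem_filter, mem_univ, true_and] at hj
      simp only [Finset.mem_Iio]
      by_contra hji
      exact hpi (hp i j (le_of_not_gt hji) hj)
    have := card_le_card hsub
    rw [Fin.card_Iio] at this
    omega

lemma card_subtype_filter {p : ι → Prop} [DecidablePred p] (q : ι → Prop) [DecidablePred q] :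
    #(univ.filter fun x : {y // p y} => q x.1) = #(univ.filter fun x => p x ∧ q x) := by
  classical
  rw [← Fintype.card_subtype, ← Fintype.card_subtype]
  exact Fintype.card_congr (Equiv.subtypeSubtypeEquivSubtypeInter p q)


variable {s : ℕ}

def cntv (b : Fin s → ZMod (s+1)) (x : ZMod (s+1)) : ℕ := #(univ.filter fun k => b k = x)

def Fcum (b : Fin s → ZMod (s+1)) (j : ℕ) : ℕ := ∑ w ∈ range j, cntv b (w : ZMod (s+1))

lemma sum_cntv (b : Fin s → ZMod (s+1)) : ∑ x : ZMod (s+1), cntv b x = s := by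
  have := Finset.card_eq_sum_card_fiberwise (f := b) (s := univ) (t := univ)
    (fun k _ => mem_univ _)
  simpa [cntv] using this.symm

lemma Fcum_add (b : Fin s → ZMod (s+1)) (j d : ℕ) :
    Fcum b (j + d) = Fcum b j + ∑ w ∈ range d, cntv b ((j + w : ℕ) : ZMod (s+1)) := by
  induction d with
  | zero => simp [Fcum]
  | succ d ih =>
      have h1 : j + (d+1) = (j + d) + 1 := rfl
      rw [h1, Fcum, Finset.sum_range_succ, ← Fcum, ih, Finset.sum_range_succ]
      omega

lemma Fcum_period (b : Fin s → ZMod (s+1)) (j : ℕ) :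
    Fcum b (j + (s + 1)) = Fcum b j + s := by
  have key : ∑ w ∈ range (s+1), cntv b ((j + w : ℕ) : ZMod (s+1)) = ∑ x : ZMod (s+1), cntv b x := by
    apply Finset.sum_nbij' (i := fun w => ((j + w : ℕ) : ZMod (s+1)))
        (j := fun x => (x - (j : ZMod (s+1))).val)
    · intro a _; exact mem_univ _
    · intro x _
      simp only [mem_range]
      exact ZMod.val_lt _
    · intro w hw
      simp only [mem_range] at hw
      push_cast
      ring_nf
      exact ZMod.val_cast_of_lt hw
    · intro x _
      push_cast
      rw [ZMod.natCast_val, ZMod.cast_id]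
      ring
    · intro w _; rfl
  rw [Fcum_add, key, sum_cntv]

def Gd (b : Fin s → ZMod (s+1)) (j : ℕ) : Prop :=
  ∀ d, 1 ≤ d → d ≤ s → Fcum b j + d ≤ Fcum b (j + d)

lemma exists_gd (b : Fin s → ZMod (s+1)) : ∃ j, j ≤ s ∧ Gd b j := by
  classical
  set φ : ℕ → ℤ := fun j => (Fcum b j : ℤ) - j with hφ
  obtain ⟨j', hj'mem, hj'min⟩ := Finset.exists_min_image (range (s+1)) φ ⟨0, by simp⟩
  set A : Finset ℕ := (range (s+1)).filter (fun j => φ j ≤ φ j') with hA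
  have hAne : A.Nonempty := ⟨j', by simp [hA, hj'mem]⟩
  set j0 := A.min' hAne with hj0
  have hj0A : j0 ∈ A := Finset.min'_mem _ _
  have hj0range : j0 ∈ range (s+1) := (mem_filter.1 hj0A).1
  have hmin : ∀ i ∈ range (s+1), φ j0 ≤ φ i := by
    intro i hi
    exact le_trans (mem_filter.1 hj0A).2 (hj'min i hi)
  have hstrict : ∀ i, i < j0 → φ j0 + 1 ≤ φ i := by
    intro i hi
    have hirange : i ∈ range (s+1) := by
      simp only [mem_range] at hj0range ⊢; omega
    by_contra hcon
    have : φ i ≤ φ j' := by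
      have := (mem_filter.1 hj0A).2
      omega
    have hiA : i ∈ A := mem_filter.2 ⟨hirange, this⟩
    have := Finset.min'_le A i hiA
    omega
  refine ⟨j0, by simp only [mem_range] at hj0range; omega, ?_⟩
  intro d h1 hd
  by_cases hcase : j0 + d ≤ s
  · have := hmin (j0 + d) (by simp; omega)
    simp only [hφ] at this
    omega
  · set r := j0 + d - (s+1) with hr
    have hrlt : r < j0 := by
      simp only [mem_range] at hj0range; omega
    have h2 := hstrict r hrlt
    have hper : Fcum b (r + (s+1)) = Fcum b r + s := Fcum_period b r
    have hrw : r + (s+1) = j0 + d := by omega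
    rw [hrw] at hper
    simp only [hφ] at h2
    omega

lemma gd_unique {b : Fin s → ZMod (s+1)} {j0 j1 : ℕ} (h0 : j0 ≤ s) (h1 : j1 ≤ s)
    (g0 : Gd b j0) (g1 : Gd b j1) : j0 = j1 := by
  by_contra hne
  -- wlog j0 < j1
  have key : ∀ a c, a ≤ s → c ≤ s → a < c → Gd b a → Gd b c → False := by
    intro a c ha hc hac ga gc
    have e1 := ga (c - a) (by omega) (by omega)
    rw [show a + (c - a) = c by omega] at e1
    have e2 := gc (a + (s+1) - c) (by omega) (by omega)
    rw [show c + (a + (s+1) - c) = a + (s+1) by omega] at e2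
    have e3 := Fcum_period b a
    omega
  rcases Nat.lt_or_ge j0 j1 with h | h
  · exact key j0 j1 h0 h1 h g0 g1
  · exact key j1 j0 h1 h0 (by omega) g1 g0

lemma card_val_lt (b : Fin s → ZMod (s+1)) {d : ℕ} (hd : d ≤ s + 1) :
    #(univ.filter fun k => (b k).val < d) = Fcum b d := by
  classical
  rw [Finset.card_eq_sum_card_fiberwise (f := fun k => (b k).val) (s := univ.filter fun k => (b k).val < d) (t := range d)
    (fun k hk => by simp only [mem_coe, mem_filter] at hk; simp [hk.2])]
  apply Finset.sum_congr rfl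
  intro w hw
  simp only [mem_range] at hw
  rw [cntv]
  congr 1
  ext k
  simp only [mem_filter, mem_univ, true_and]
  constructor
  · rintro ⟨-, h2⟩
    rw [← h2, ZMod.natCast_val, ZMod.cast_id]
  · intro h
    have : (b k).val = w := by rw [h, ZMod.val_cast_of_lt (by omega)]
    omega

/-- the lift of a `ZMod`-vector to a vector with entries in `[1, s+1]` -/
def liftb (b : Fin s → ZMod (s+1)) : Fin s → ℕ := fun k => (b k).val + 1

def GoodZ (b : Fin s → ZMod (s+1)) : Prop := ∀ d, d ≤ s → d ≤ cnt (liftb b) d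

lemma cnt_liftb (b : Fin s → ZMod (s+1)) {d : ℕ} (hd : d ≤ s + 1) :
    cnt (liftb b) d = Fcum b d := by
  rw [← card_val_lt b hd, cnt]
  congr 1

lemma goodZ_shift_iff (b : Fin s → ZMod (s+1)) (j : ℕ) :
    GoodZ (fun k => b k - (j : ZMod (s+1))) ↔ Gd b j := by
  have key : ∀ d, d ≤ s + 1 → Fcum b j + Fcum (fun k => b k - (j : ZMod (s+1))) d = Fcum b (j + d) := by
    intro d _
    rw [Fcum_add]
    congr 1
    rw [Fcum]
    apply Finset.sum_congr rfl
    intro w _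
    rw [cntv, cntv]
    congr 1
    ext k
    simp only [mem_filter, mem_univ, true_and]
    constructor
    · intro h
      rw [sub_eq_iff_eq_add] at h
      rw [h]; push_cast; ring
    · intro h
      rw [sub_eq_iff_eq_add, h]; push_cast; ring
  constructor
  · intro hg d h1 hd
    have := hg d hd
    rw [cnt_liftb _ (by omega)] at this
    have hk := key d (by omega)
    omega
  · intro hg d hd
    rw [cnt_liftb _ (by omega)]
    rcases Nat.eq_zero_or_pos d with rfl | hpos
    · omega
    · have := hg d hpos hd
      have hk := key d (by omega)
      omega

lemma existsUnique_goodZ (b : Fin s → ZMod (s+1)) : ∃! z : ZMod (s+1), GoodZ (fun k => b k + z) := by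
  obtain ⟨j0, hj0, hgd⟩ := exists_gd b
  refine ⟨-(j0 : ZMod (s+1)), ?_, ?_⟩
  · show GoodZ (fun k => b k + -((j0:ℕ) : ZMod (s+1)))
    have heq : (fun k => b k + -((j0:ℕ) : ZMod (s+1))) = fun k => b k - ((j0:ℕ) : ZMod (s+1)) := by
      funext k; ring
    rw [heq, goodZ_shift_iff]
    exact hgd
  · intro z hz
    set j := (-z).val with hj
    have hcast : ((j : ℕ) : ZMod (s+1)) = -z := by
      rw [hj, ZMod.natCast_val, ZMod.cast_id]
    have heq : (fun k => b k + z) = fun k => b k - (j : ZMod (s+1)) := by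
      funext k; rw [hcast]; ring
    rw [heq, goodZ_shift_iff] at hz
    have hjj : j = j0 := gd_unique (by have := ZMod.val_lt (-z); omega) hj0 hz hgd
    have h2 : ((j : ℕ) : ZMod (s+1)) = ((j0 : ℕ) : ZMod (s+1)) := by rw [hjj]
    rw [hcast] at h2
    rw [← h2, neg_neg]

theorem card_goodZ (hs : 1 ≤ s) :
    Nat.card {b : Fin s → ZMod (s+1) // GoodZ b} = (s+1)^(s-1) := by
  have hbij : Function.Bijective
      (fun pz : {b : Fin s → ZMod (s+1) // GoodZ b} × ZMod (s+1) => fun k => pz.1.1 k + pz.2) := by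
    constructor
    · rintro ⟨⟨p, hp⟩, z⟩ ⟨⟨p', hp'⟩, z'⟩ heq
      simp only at heq
      set c : Fin s → ZMod (s+1) := fun k => p k + z with hc
      have hc' : ∀ k, p' k = c k + -z' := by
        intro k
        have h := congrFun heq k
        simp only [hc] at h ⊢
        rw [h]; ring
      have hp2 : GoodZ (fun k => c k + -z) := by
        have heq2 : (fun k => c k + -z) = p := by funext k; simp only [hc]; ring
        rw [heq2]; exact hp
      have hp2' : GoodZ (fun k => c k + -z') := by
        have : (fun k => c k + -z') = p' := by funext k; rw [hc' k]
        rw [this]; exact hp'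
      obtain ⟨w, -, huniq⟩ := existsUnique_goodZ c
      have h1 := huniq _ hp2
      have h2 := huniq _ hp2'
      have hz : z = z' := by
        have := h1.trans h2.symm
        exact neg_injective this
      subst hz
      refine Prod.ext ?_ rfl
      apply Subtype.ext
      funext k
      have := congrFun heq k
      exact add_right_cancel this
    · intro b
      obtain ⟨z, hz, -⟩ := existsUnique_goodZ b
      refine ⟨⟨⟨fun k => b k + z, hz⟩, -z⟩, ?_⟩
      funext k
      simp only
      ring
  have hcard := Nat.card_eq_of_bijective _ hbij
  rw [Nat.card_prod] at hcard
  have h1 : Nat.card (Fin s → ZMod (s+1)) = (s+1)^s := by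
    rw [Nat.card_eq_fintype_card, Fintype.card_fun, ZMod.card, Fintype.card_fin]
  have h2 : Nat.card (ZMod (s+1)) = s + 1 := by
    rw [Nat.card_eq_fintype_card, ZMod.card]
  rw [h1, h2] at hcard
  have : (s+1)^s = (s+1)^(s-1) * (s+1) := by
    rw [← pow_succ]
    congr 1
    omega
  rw [this] at hcard
  exact Nat.eq_of_mul_eq_mul_right (by omega) hcard

theorem card_PF (s : ℕ) :
    Nat.card {p : Fin s → ℕ | (∀ k, 1 ≤ p k ∧ p k ≤ s) ∧ ∀ d, d ≤ s → d ≤ cnt p d} =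
      (s+1)^(s-1) := by
  rcases Nat.eq_zero_or_pos s with rfl | hs
  · have : {p : Fin 0 → ℕ | (∀ k, 1 ≤ p k ∧ p k ≤ 0) ∧ ∀ d, d ≤ 0 → d ≤ cnt p d} = Set.univ := by
      ext p
      simp only [Set.mem_setOf_eq, Set.mem_univ, iff_true]
      exact ⟨fun k => k.elim0, fun d hd => by omega⟩
    rw [this]
    simp [Nat.card_congr (Equiv.Set.univ _)]
  · rw [← card_goodZ hs]
    apply Nat.card_congr
    refine ⟨fun p => ⟨fun k => ((p.1 k - 1 : ℕ) : ZMod (s+1)), ?_⟩,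
      fun b => ⟨liftb b.1, ?_, ?_⟩, ?_, ?_⟩
    · -- GoodZ of image
      have hlift : liftb (fun k => ((p.1 k - 1 : ℕ) : ZMod (s+1))) = p.1 := by
        funext k
        have hb := p.2.1 k
        simp only [liftb]
        rw [ZMod.val_cast_of_lt (by omega)]
        omega
      intro d hd
      rw [hlift]
      exact p.2.2 d hd
    · -- bounds
      intro k
      constructor
      · simp [liftb]
      · have h1 := b.2 s (le_refl s)
        have h2 := cnt_le_card (liftb b.1) s
        rw [Fintype.card_fin] at h2
        have := cnt_all (v := s) (c := liftb b.1) (by rw [Fintype.card_fin]; omega) k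
        exact this
    · exact fun d hd => b.2 d hd
    · -- left inverse
      intro p
      apply Subtype.ext
      funext k
      simp only [liftb]
      have hb := p.2.1 k
      rw [ZMod.val_cast_of_lt (by omega)]
      omega
    · -- right inverse
      intro b
      apply Subtype.ext
      funext k
      simp only [liftb]
      rw [show (b.1 k).val + 1 - 1 = (b.1 k).val by omega, ZMod.natCast_val, ZMod.cast_id]

theorem card_fiber_eq_multinomial {κ : Type} [DecidableEq κ] [Fintype κ] (s : Finset κ) :
    ∀ (ι' : Type) [Fintype ι'] [DecidableEq ι'] (ℓ : κ → ℕ), (∑ j ∈ s, ℓ j) = Fintype.card ι' →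
    Nat.card {g : ι' → κ // (∀ k, g k ∈ s) ∧ ∀ j ∈ s, #(univ.filter fun k => g k = j) = ℓ j} =
      Nat.multinomial s ℓ := by
  classical
  induction s using Finset.cons_induction with
  | empty =>
      intro ι' _ _ ℓ h
      simp only [Finset.sum_empty] at h
      have hempty : IsEmpty ι' := Fintype.card_eq_zero_iff.1 h.symm
      have huniv : ∀ g : ι' → κ, (∀ k, g k ∈ (∅ : Finset κ)) ∧
          ∀ j ∈ (∅ : Finset κ), #(univ.filter fun k => g k = j) = ℓ j := by
        intro g
        exact ⟨fun k => (hempty.false k).elim, fun j hj => absurd hj (notMem_empty j)⟩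
      rw [Nat.multinomial_empty]
      rw [Nat.card_eq_fintype_card]
      rw [Fintype.card_eq_one_iff]
      refine ⟨⟨fun k => (hempty.false k).elim, huniv _⟩, ?_⟩
      rintro ⟨g, hg⟩
      apply Subtype.ext
      funext k
      exact (hempty.false k).elim
  | cons a s' ha ih =>
      intro ι' _ _ ℓ h
      rw [Finset.sum_cons] at h
      -- convert Nat.card to Finset.card
      rw [Nat.card_eq_fintype_card, Fintype.card_subtype]
      have hmaps : ∀ g ∈ (univ : Finset (ι' → κ)).filter fun g =>
          (∀ k, g k ∈ cons a s' ha) ∧ ∀ j ∈ cons a s' ha, #(univ.filter fun k => g k = j) = ℓ j,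
          (univ.filter fun k => g k = a) ∈ powersetCard (ℓ a) (univ : Finset ι') := by
        intro g hg
        rw [mem_filter] at hg
        rw [Finset.mem_powersetCard_univ]
        exact hg.2.2 a (mem_cons_self a s')
      rw [Finset.card_eq_sum_card_fiberwise hmaps]
      have hper : ∀ S ∈ powersetCard (ℓ a) (univ : Finset ι'),
          #(((univ : Finset (ι' → κ)).filter fun g =>
            (∀ k, g k ∈ cons a s' ha) ∧ ∀ j ∈ cons a s' ha, #(univ.filter fun k => g k = j) = ℓ j).filter
              fun g => (univ.filter fun k => g k = a) = S) = Nat.multinomial s' ℓ := by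
        intro S hS
        rw [Finset.mem_powersetCard_univ] at hS
        have hcard' : (∑ j ∈ s', ℓ j) = Fintype.card {k : ι' // k ∉ S} := by
          rw [Fintype.card_subtype]
          have : (univ.filter fun k : ι' => k ∉ S) = univ \ S := by
            ext k; simp
          rw [this, Finset.card_univ_diff, hS]
          omega
        have := ih {k : ι' // k ∉ S} ℓ hcard'
        rw [Nat.card_eq_fintype_card, Fintype.card_subtype] at this
        rw [← this]
        apply Finset.card_bij'
          (i := fun g _ => fun k' : {k : ι' // k ∉ S} => g k'.1)
          (j := fun g' _ => fun k => if hk : k ∈ S then a else g' ⟨k, hk⟩)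
        · -- i maps into target
          intro g hg
          simp only [mem_filter, mem_univ, true_and] at hg ⊢
          obtain ⟨⟨hmem, hfib⟩, hfa⟩ := hg
          constructor
          · intro k'
            have h1 := hmem k'.1
            rw [mem_cons] at h1
            rcases h1 with h1 | h1
            · exfalso
              have hmem2 : (k'.1 : ι') ∈ (univ.filter fun k => g k = a) := by simp [h1]
              rw [hfa] at hmem2
              exact k'.2 hmem2
            · exact h1
          · intro j hj
            have hja : j ≠ a := by rintro rfl; exact ha hj
            rw [card_subtype_filter (fun k => g k = j)]
            rw [← hfib j (mem_cons_of_mem hj)]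
            congr 1
            ext k
            simp only [mem_filter, mem_univ, true_and, and_iff_right_iff_imp]
            intro hgk
            rw [← hfa]
            simp [hgk, hja]
        · -- j maps into source
          intro g' hg'
          simp only [mem_filter, mem_univ, true_and] at hg' ⊢
          obtain ⟨hmem, hfib⟩ := hg'
          have hfa : (univ.filter fun k => (if hk : k ∈ S then a else g' ⟨k, hk⟩) = a) = S := by
            ext k
            simp only [mem_filter, mem_univ, true_and]
            by_cases hk : k ∈ S
            · simp [hk]
            · simp only [hk, dif_neg, not_false_iff, iff_false]
              intro hcon
              have := hmem ⟨k, hk⟩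
              rw [hcon] at this
              exact ha this
          refine ⟨⟨?_, ?_⟩, hfa⟩
          · intro k
            by_cases hk : k ∈ S
            · simp [hk, mem_cons_self]
            · simp only [hk, dif_neg, not_false_iff]
              exact mem_cons_of_mem (hmem ⟨k, hk⟩)
          · intro j hj
            rw [mem_cons] at hj
            rcases hj with rfl | hj
            · rw [hfa, hS]
            · have hja : j ≠ a := by rintro rfl; exact ha hj
              rw [← hfib j hj]
              have e1 := card_subtype_filter (p := fun k : ι' => k ∉ S)
                (fun k => (if hk : k ∈ S then a else g' ⟨k, hk⟩) = j)
              have e2 : (univ.filter fun x : {k : ι' // k ∉ S} =>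
                  (if hk : (x : ι') ∈ S then a else g' ⟨x, hk⟩) = j) =
                  (univ.filter fun x : {k : ι' // k ∉ S} => g' x = j) := by
                apply filter_congr
                intro x _
                rw [dif_neg x.2]
              have e3 : (univ.filter fun k : ι' => ¬ k ∈ S ∧ (if hk : k ∈ S then a else g' ⟨k, hk⟩) = j) =
                  (univ.filter fun k : ι' => (if hk : k ∈ S then a else g' ⟨k, hk⟩) = j) := by
                apply filter_congr
                intro k _
                by_cases hk : k ∈ S
                · simp only [hk, dif_pos, not_true, false_and, false_iff]
                  exact fun hc => hja hc.symm
                · simp [hk]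
              rw [← e2, e1, e3]
        · -- left inverse
          intro g hg
          simp only [mem_filter, mem_univ, true_and] at hg
          funext k
          by_cases hk : k ∈ S
          · simp only [hk, dif_pos]
            rw [← hg.2] at hk
            simp only [mem_filter, mem_univ, true_and] at hk
            exact hk.symm
          · simp only [hk, dif_neg, not_false_iff]
        · -- right inverse
          intro g' hg'
          funext k'
          simp only [k'.2, dif_neg, not_false_iff]
      rw [Finset.sum_congr rfl hper, Finset.sum_const, Finset.card_powersetCard,
        Finset.card_univ, smul_eq_mul, Nat.multinomial_cons]
      congr 1
      rw [h]

/-! ### the separator functions W -/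

noncomputable def W (c : ι → ℕ) (j : ℕ) : ℕ := sInf {v | cnt c v + j ≤ v}

lemma W_nonempty (c : ι → ℕ) (j : ℕ) : {v | cnt c v + j ≤ v}.Nonempty := by
  refine ⟨Fintype.card ι + j, ?_⟩
  have := cnt_le_card c (Fintype.card ι + j)
  simp only [Set.mem_setOf_eq]
  omega

lemma W_spec (c : ι → ℕ) (j : ℕ) : cnt c (W c j) + j ≤ W c j :=
  Nat.sInf_mem (W_nonempty c j)

lemma W_min {c : ι → ℕ} {j v : ℕ} (h : v < W c j) : v < cnt c v + j := by
  have := Nat.notMem_of_lt_sInf h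
  simp only [Set.mem_setOf_eq, not_le] at this
  omega

lemma W_cnt (c : ι → ℕ) (j : ℕ) : cnt c (W c j) + j = W c j := by
  have h1 := W_spec c j
  rcases Nat.eq_zero_or_pos (W c j) with h0 | h0
  · omega
  · have h2 : W c j - 1 < W c j := by omega
    have h3 := W_min h2
    have h4 : cnt c (W c j - 1) ≤ cnt c (W c j) := cnt_mono c (by omega)
    omega

lemma W_zero {c : ι → ℕ} (h1 : ∀ k, 1 ≤ c k) : W c 0 = 0 := by
  apply Nat.sInf_eq_zero.2
  left
  simp only [Set.mem_setOf_eq, cnt_zero h1]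
  omega

lemma W_notval {c : ι → ℕ} {j : ℕ} (hj : 1 ≤ j) (h1 : ∀ k, 1 ≤ c k) (k : ι) :
    c k ≠ W c j := by
  intro hk
  have hw : 1 ≤ W c j := by have := h1 k; omega
  have h2 := cnt_lt_of_val hk (by omega)
  have h3 : W c j - 1 < W c j := by omega
  have h4 := W_min h3
  have h5 := W_cnt c j
  omega

lemma W_lt_succ (c : ι → ℕ) (j : ℕ) : W c j < W c (j+1) := by
  by_contra h
  push_neg at h
  have spec := W_spec c (j+1)
  rcases Nat.lt_or_ge (W c (j+1)) (W c j) with h2 | h2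
  · have := W_min h2
    omega
  · have heq : W c (j+1) = W c j := le_antisymm h h2
    have h3 := W_cnt c j
    rw [heq] at spec
    omega

lemma W_mono (c : ι → ℕ) : Monotone (W c) :=
  monotone_nat_of_le_succ (fun j => (W_lt_succ c j).le)

lemma W_ge (c : ι → ℕ) (j : ℕ) : j ≤ W c j := by
  have := W_cnt c j; omega

lemma W_le_of_mem {c : ι → ℕ} {j v : ℕ} (h : cnt c v + j ≤ v) : W c j ≤ v :=
  Nat.sInf_le h

/-! ### block decomposition -/

variable {N m : ℕ}

def sz (g : Fin N → Fin (m+1)) : Fin (m+1) → ℕ := fun j => #(univ.filter fun k => g k = j)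

def psum (ℓ : Fin (m+1) → ℕ) (r : ℕ) : ℕ := ∑ i ∈ univ.filter (fun i : Fin (m+1) => i.1 < r), ℓ i

def off (ℓ : Fin (m+1) → ℕ) (j : Fin (m+1)) : ℕ := j.1 + psum ℓ j.1

def Xpred (g : Fin N → Fin (m+1)) (c : Fin N → ℕ) : Prop :=
  (∀ k, off (sz g) (g k) < c k ∧ c k ≤ off (sz g) (g k) + sz g (g k)) ∧
  ∀ j : Fin (m+1), ∀ d, d ≤ sz g j →
    d ≤ #(univ.filter fun k => g k = j ∧ c k ≤ off (sz g) j + d)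

noncomputable def gdef (c : Fin N → ℕ) : Fin N → Fin (m+1) := fun k =>
  ⟨min (#(univ.filter fun j : Fin (m+1) => W c (j.1+1) < c k)) m, by omega⟩

lemma psum_zero (ℓ : Fin (m+1) → ℕ) : psum ℓ 0 = 0 := by
  rw [psum]
  convert Finset.sum_empty
  ext i
  simp

lemma psum_succ (ℓ : Fin (m+1) → ℕ) {r : ℕ} (hr : r < m+1) :
    psum ℓ (r+1) = psum ℓ r + ℓ ⟨r, hr⟩ := by
  rw [psum, psum]
  have : (univ.filter fun i : Fin (m+1) => i.1 < r + 1) =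
      insert ⟨r, hr⟩ (univ.filter fun i : Fin (m+1) => i.1 < r) := by
    ext i
    simp only [mem_filter, mem_univ, true_and, mem_insert, Fin.ext_iff]
    omega
  rw [this, Finset.sum_insert (by simp)]
  omega

lemma psum_mono (ℓ : Fin (m+1) → ℕ) : Monotone (psum ℓ) := by
  intro r r' h
  apply Finset.sum_le_sum_of_subset
  intro i hi
  simp only [mem_filter, mem_univ, true_and] at hi ⊢
  omega

lemma psum_top (ℓ : Fin (m+1) → ℕ) {r : ℕ} (hr : m + 1 ≤ r) : psum ℓ r = ∑ i, ℓ i := by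
  rw [psum]
  congr 1
  apply filter_true_of_mem
  intro i _
  have := i.2
  omega

lemma sum_sz (g : Fin N → Fin (m+1)) : ∑ j, sz g j = N := by
  have := Finset.card_eq_sum_card_fiberwise (f := g) (s := univ) (t := univ) (fun k _ => mem_univ _)
  rw [Finset.card_univ, Fintype.card_fin] at this
  simp only [sz]
  exact this.symm

lemma off_gap {ℓ : Fin (m+1) → ℕ} {i j : Fin (m+1)} (hij : i.1 < j.1) :
    off ℓ i + ℓ i + 1 ≤ off ℓ j := by
  rw [off, off]
  have h1 : psum ℓ (i.1 + 1) = psum ℓ i.1 + ℓ i := by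
    have := psum_succ ℓ (r := i.1) (by omega)
    simpa using this
  have h2 : psum ℓ (i.1+1) ≤ psum ℓ j.1 := psum_mono ℓ (by omega)
  omega

lemma val_bound_Xpred {g : Fin N → Fin (m+1)} {c : Fin N → ℕ} (hX : Xpred g c) (k : Fin N) :
    c k ≤ m + psum (sz g) (m+1) := by
  have h1 := (hX.1 k).2
  have h2 : psum (sz g) ((g k).1 + 1) ≤ psum (sz g) (m+1) := psum_mono _ (by have := (g k).2; omega)
  have h3 : psum (sz g) ((g k).1 + 1) = psum (sz g) (g k).1 + sz g (g k) := by
    have := psum_succ (sz g) (r := (g k).1) (by have := (g k).2; omega)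
    simpa using this
  rw [off] at h1
  have := (g k).2
  omega

/-- central count computation under `Xpred` -/
lemma cnt_Xpred {g : Fin N → Fin (m+1)} {c : Fin N → ℕ} (hX : Xpred g c)
    (j : Fin (m+1)) (d : ℕ) (hd : d ≤ sz g j) :
    cnt c (off (sz g) j + d) =
      psum (sz g) j.1 + #(univ.filter fun k => g k = j ∧ c k ≤ off (sz g) j + d) := by
  classical
  set v := off (sz g) j + d with hv
  have hfib : cnt c v = ∑ i : Fin (m+1), #(univ.filter fun k => g k = i ∧ c k ≤ v) := by
    rw [cnt, Finset.card_eq_sum_card_fiberwise (f := g) (t := univ) (fun k _ => mem_univ _)]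
    apply Finset.sum_congr rfl
    intro i _
    congr 1
    rw [Finset.filter_filter]
    apply filter_congr
    intro k _
    tauto
  rw [hfib]
  have hterm : ∀ i : Fin (m+1), #(univ.filter fun k => g k = i ∧ c k ≤ v) =
      if i.1 < j.1 then sz g i else if i = j then
        #(univ.filter fun k => g k = j ∧ c k ≤ v) else 0 := by
    intro i
    rcases Nat.lt_trichotomy i.1 j.1 with hij | hij | hij
    · rw [if_pos hij, sz]
      congr 1
      apply filter_congr
      intro k _
      constructor
      · exact fun h => h.1
      · intro h
        refine ⟨h, ?_⟩
        have hb := (hX.1 k).2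
        rw [h] at hb
        have := off_gap (ℓ := sz g) hij
        omega
    · have : i = j := Fin.ext hij
      subst this
      rw [if_neg (by omega), if_pos rfl]
    · rw [if_neg (by omega), if_neg (by intro h; subst h; omega)]
      rw [Finset.card_eq_zero, filter_eq_empty_iff]
      intro k _
      rintro ⟨hgk, hck⟩
      have hb := (hX.1 k).1
      rw [hgk] at hb
      have := off_gap (ℓ := sz g) (i := j) (j := i) hij
      omega
  rw [Finset.sum_congr rfl (fun i _ => hterm i), Finset.sum_ite]
  have h2 : ∑ i ∈ filter (fun i : Fin (m+1) => ¬ i.1 < j.1) univ,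
      (if i = j then #(univ.filter fun k => g k = j ∧ c k ≤ v) else 0) =
      #(univ.filter fun k => g k = j ∧ c k ≤ v) := by
    rw [Finset.sum_eq_single j]
    · rw [if_pos rfl]
    · intro b _ hb; rw [if_neg hb]
    · intro hj
      exfalso
      apply hj
      simp
  rw [h2]
  rfl

variable {g : Fin N → Fin (m+1)} {c : Fin N → ℕ}

lemma H1_of_Xpred (hX : Xpred g c) : ∀ k, 1 ≤ c k := fun k => by
  have := (hX.1 k).1; omega

lemma W_of_Xpred (hX : Xpred g c) : ∀ r, r ≤ m + 1 → W c r = r + psum (sz g) r := by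
  intro r
  induction r with
  | zero => intro _; rw [psum_zero, W_zero (H1_of_Xpred hX)]
  | succ r ih =>
    intro hr
    have hrm : r < m + 1 := by omega
    have ihr := ih (by omega)
    have hps : psum (sz g) (r+1) = psum (sz g) r + sz g ⟨r, hrm⟩ := psum_succ _ hrm
    have hofj : off (sz g) ⟨r, hrm⟩ = r + psum (sz g) r := rfl
    have hmem : cnt c ((r+1) + psum (sz g) (r+1)) + (r+1) ≤ (r+1) + psum (sz g) (r+1) := by
      rcases Nat.lt_or_ge (r+1) (m+1) with hr1 | hr1
      · have hempty : #(univ.filter fun k => g k = ⟨r+1, hr1⟩ ∧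
            c k ≤ off (sz g) ⟨r+1, hr1⟩ + 0) = 0 := by
          rw [Finset.card_eq_zero, filter_eq_empty_iff]
          intro k _
          rintro ⟨hgk, hck⟩
          have hb := (hX.1 k).1
          rw [hgk] at hb
          omega
        have h0 := cnt_Xpred hX ⟨r+1, hr1⟩ 0 (Nat.zero_le _)
        rw [hempty] at h0
        have he1 : off (sz g) ⟨r+1, hr1⟩ + 0 = (r+1) + psum (sz g) (r+1) := rfl
        have he2 : ((⟨r+1, hr1⟩ : Fin (m+1)) : ℕ) = r+1 := rfl
        rw [he1, he2] at h0
        omega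
      · have hrm1 : r = m := by omega
        subst hrm1
        have hall : ∀ k, c k ≤ r + psum (sz g) (r+1) := by
          intro k
          have := val_bound_Xpred hX k
          omega
        have hcnt : cnt c ((r+1) + psum (sz g) (r+1)) = N := by
          rw [cnt_eq_card (fun k => by have := hall k; omega), Fintype.card_fin]
        have hN : psum (sz g) (r+1) = N := by
          rw [psum_top _ (by omega), sum_sz]
        omega
    have hminim : ∀ v, v < (r+1) + psum (sz g) (r+1) → v < cnt c v + (r+1) := by
      intro v hv
      rcases Nat.lt_or_ge v (W c r) with h | h
      · have := W_min h; omega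
      · have hoffj : off (sz g) ⟨r, hrm⟩ = W c r := by rw [hofj, ihr]
        have hvd : v = off (sz g) ⟨r, hrm⟩ + (v - off (sz g) ⟨r, hrm⟩) := by
          rw [hoffj]; omega
        have hdz : (v - off (sz g) ⟨r, hrm⟩) ≤ sz g ⟨r, hrm⟩ := by
          rw [hofj]
          omega
        have hq := hX.2 ⟨r, hrm⟩ _ hdz
        have hc := cnt_Xpred hX ⟨r, hrm⟩ _ hdz
        rw [← hvd] at hc hq
        have he2 : ((⟨r, hrm⟩ : Fin (m+1)) : ℕ) = r := rfl
        rw [he2] at hc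
        have hvoff : off (sz g) ⟨r, hrm⟩ ≤ v := by rw [hoffj]; exact h
        rw [hofj] at hvd
        omega
    apply le_antisymm (W_le_of_mem hmem)
    by_contra hlt
    push_neg at hlt
    have h5 := hminim _ hlt
    have spec := W_spec c (r+1)
    omega

lemma card_lt_fin : ∀ {r : ℕ}, r ≤ m+1 → #(univ.filter fun i : Fin (m+1) => i.1 < r) = r := by
  intro r
  induction r with
  | zero => intro _; simp
  | succ r ih =>
    intro hr
    have : (univ.filter fun i : Fin (m+1) => i.1 < r + 1) =
        insert ⟨r, by omega⟩ (univ.filter fun i : Fin (m+1) => i.1 < r) := by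
      ext i
      simp only [mem_filter, mem_univ, true_and, mem_insert, Fin.ext_iff]
      omega
    rw [this, Finset.card_insert_of_notMem (by simp), ih (by omega)]

lemma gdef_of_Xpred (hX : Xpred g c) : gdef c = g := by
  funext k
  have hWr := W_of_Xpred hX
  have hiff : ∀ i : Fin (m+1), (W c (i.1+1) < c k ↔ i.1 < (g k).1) := by
    intro i
    have hi2 := i.2
    have hgk2 := (g k).2
    have hW := hWr (i.1+1) (by omega)
    constructor
    · intro h
      by_contra hc
      push_neg at hc
      have hb := (hX.1 k).2
      have hp : psum (sz g) ((g k).1+1) = psum (sz g) (g k).1 + sz g (g k) := by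
        have := psum_succ (sz g) (r := (g k).1) (by omega)
        simpa using this
      have hmon : psum (sz g) ((g k).1+1) ≤ psum (sz g) (i.1+1) := psum_mono _ (by omega)
      rw [off] at hb
      omega
    · intro h
      have hb := (hX.1 k).1
      have hmon : psum (sz g) (i.1+1) ≤ psum (sz g) (g k).1 := psum_mono _ (by omega)
      rw [off] at hb
      omega
  have hcardeq : #(univ.filter fun j : Fin (m+1) => W c (j.1+1) < c k) = (g k).1 := by
    rw [filter_congr (fun i _ => hiff i)]
    exact card_lt_fin (by have := (g k).2; omega)
  apply Fin.ext
  show min (#(univ.filter fun j : Fin (m+1) => W c (j.1+1) < c k)) m = (g k).1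
  rw [hcardeq]
  exact min_eq_left (by have := (g k).2; omega)

/-! ### backward: from separators to `Xpred` -/

section backward
variable (h1 : ∀ k, 1 ≤ c k) (h2 : ∀ k, c k ≤ N + m) (htop : W c (m+1) = N + m + 1)

include h1 h2 htop

lemma gdef_val (k : Fin N) :
    ((gdef c k : Fin (m+1)) : ℕ) = #(univ.filter fun j : Fin (m+1) => W c (j.1+1) < c k) := by
  have hnot : (⟨m, by omega⟩ : Fin (m+1)) ∉
      (univ.filter fun j : Fin (m+1) => W c (j.1+1) < c k) := by
    simp only [mem_filter, mem_univ, true_and, not_lt]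
    show c k ≤ W c (m + 1)
    rw [htop]
    have := h2 k
    omega
  have hsub : (univ.filter fun j : Fin (m+1) => W c (j.1+1) < c k) ⊆
      univ.erase ⟨m, by omega⟩ := by
    intro j hj
    exact mem_erase.2 ⟨fun hje => hnot (hje ▸ hj), mem_univ _⟩
  have hle := card_le_card hsub
  rw [card_erase_of_mem (mem_univ _), card_univ, Fintype.card_fin] at hle
  show min _ m = _
  exact min_eq_left (by omega)

lemma gdef_mem_iff (k : Fin N) (i : Fin (m+1)) :
    W c (i.1+1) < c k ↔ i.1 < ((gdef c k : Fin (m+1)) : ℕ) := by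
  rw [gdef_val h1 h2 htop]
  refine downset_mem_iff (p := fun j : Fin (m+1) => W c (j.1+1) < c k) ?_ i
  intro a b hab hpb
  have hm : W c (a.1+1) ≤ W c (b.1+1) := W_mono c (by
    simp only [Fin.le_def] at hab
    omega)
  omega

lemma gdef_spec (k : Fin N) :
    W c ((gdef c k : Fin (m+1)) : ℕ) < c k ∧ c k < W c (((gdef c k : Fin (m+1)) : ℕ) + 1) := by
  constructor
  · rcases Nat.eq_zero_or_pos ((gdef c k : Fin (m+1)) : ℕ) with h0 | h0
    · rw [h0, W_zero h1]; exact h1 k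
    · have hgk2 : ((gdef c k : Fin (m+1)) : ℕ) < m + 1 := (gdef c k).2
      have hmm := (gdef_mem_iff h1 h2 htop k ⟨(gdef c k : Fin (m+1)) - 1, by omega⟩).2 (by
        show ((gdef c k : Fin (m+1)) : ℕ) - 1 < _
        omega)
      have heq : ((⟨((gdef c k : Fin (m+1)) : ℕ) - 1, by omega⟩ : Fin (m+1)) : ℕ) + 1 =
          ((gdef c k : Fin (m+1)) : ℕ) := by
        show ((gdef c k : Fin (m+1)) : ℕ) - 1 + 1 = _
        omega
      rw [heq] at hmm
      exact hmm
  · have hnot : ¬ (W c (((gdef c k : Fin (m+1)) : ℕ) + 1) < c k) := by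
      rw [gdef_mem_iff h1 h2 htop k (gdef c k)]
      omega
    have hne := W_notval (c := c) (j := ((gdef c k : Fin (m+1)) : ℕ) + 1) (by omega) h1 k
    omega

lemma fiber_gdef (j : Fin (m+1)) (k : Fin N) :
    gdef c k = j ↔ (W c j.1 < c k ∧ c k < W c (j.1+1)) := by
  constructor
  · rintro rfl
    exact gdef_spec h1 h2 htop k
  · rintro ⟨ha, hb⟩
    rcases Nat.lt_trichotomy ((gdef c k : Fin (m+1)) : ℕ) j.1 with h | h | h
    · have hs := (gdef_spec h1 h2 htop k).2
      have hm := W_mono c (show ((gdef c k : Fin (m+1)) : ℕ) + 1 ≤ j.1 by omega)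
      omega
    · exact Fin.ext h
    · have hs := (gdef_spec h1 h2 htop k).1
      have hm := W_mono c (show j.1 + 1 ≤ ((gdef c k : Fin (m+1)) : ℕ) by omega)
      omega

lemma sz_gdef (j : Fin (m+1)) :
    W c j.1 + 1 + sz (gdef c) j = W c (j.1+1) := by
  have hlt := W_lt_succ c j.1
  have hfe : (univ.filter fun k => gdef c k = j) =
      (univ.filter fun k => W c j.1 < c k ∧ c k ≤ W c (j.1+1) - 1) := by
    apply filter_congr
    intro k _
    rw [fiber_gdef h1 h2 htop]
    exact ⟨fun hh => ⟨hh.1, by omega⟩, fun hh => ⟨hh.1, by omega⟩⟩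
  have hsplit := cnt_split c (a := W c j.1) (B := W c (j.1+1) - 1) (by omega)
  have hnv := W_notval (c := c) (j := j.1+1) (by omega) h1
  have hpred : cnt c (W c (j.1+1) - 1) = cnt c (W c (j.1+1)) := by
    rw [cnt, cnt]
    congr 1
    apply filter_congr
    intro k _
    have := hnv k
    exact ⟨fun h => by omega, fun h => by omega⟩
  have e1 := W_cnt c j.1
  have e2 := W_cnt c (j.1+1)
  rw [sz, hfe]
  omega

lemma off_gdef : ∀ r, r ≤ m+1 → r + psum (sz (gdef c : Fin N → Fin (m+1))) r = W c r := by
  intro r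
  induction r with
  | zero => intro _; rw [psum_zero, W_zero h1]
  | succ r ih =>
    intro hr
    have hrm : r < m + 1 := by omega
    have ihr := ih (by omega)
    have hps : psum (sz (gdef c)) (r+1) = psum (sz (gdef c)) r + sz (gdef c) ⟨r, hrm⟩ :=
      psum_succ _ hrm
    have hsz := sz_gdef h1 h2 htop ⟨r, hrm⟩
    have he : ((⟨r, hrm⟩ : Fin (m+1)) : ℕ) = r := rfl
    rw [he] at hsz
    omega

lemma Xpred_gdef : Xpred (gdef c : Fin N → Fin (m+1)) c := by
  have hoff : ∀ j : Fin (m+1), off (sz (gdef c)) j = W c j.1 := by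
    intro j
    rw [off, off_gdef h1 h2 htop j.1 (by have := j.2; omega)]
  constructor
  · intro k
    have hs := gdef_spec h1 h2 htop k
    have hsz := sz_gdef h1 h2 htop (gdef c k)
    rw [hoff]
    exact ⟨hs.1, by omega⟩
  · intro j d hd
    have hsz := sz_gdef h1 h2 htop j
    have hlt := W_lt_succ c j.1
    have hsplit := cnt_split c (a := W c j.1) (B := W c j.1 + d) (by omega)
    have hmin : W c j.1 + d < W c (j.1+1) := by omega
    have hm2 := W_min (c := c) (j := j.1+1) hmin
    have e1 := W_cnt c j.1
    have hfe : (univ.filter fun k => gdef c k = j ∧ c k ≤ off (sz (gdef c)) j + d) =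
        (univ.filter fun k => W c j.1 < c k ∧ c k ≤ W c j.1 + d) := by
      apply filter_congr
      intro k _
      rw [hoff, fiber_gdef h1 h2 htop]
      exact ⟨fun hh => ⟨hh.1.1, hh.2⟩, fun hh => ⟨⟨hh.1, by omega⟩, hh.2⟩⟩
    rw [hfe]
    omega


end backward

lemma card_filter_comp {α β : Type} [Fintype α] [Fintype β] (e : α ≃ β)
    (p : β → Prop) [DecidablePred p] :
    #(univ.filter fun i : α => p (e i)) = #(univ.filter fun k : β => p k) := by
  apply Finset.card_bij' (i := fun i _ => e i) (j := fun k _ => e.symm k)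
  · intro i hi
    simp only [mem_filter, mem_univ, true_and] at hi ⊢
    exact hi
  · intro k hk
    simp only [mem_filter, mem_univ, true_and] at hk ⊢
    rwa [Equiv.apply_symm_apply]
  · intro i _; exact e.symm_apply_apply i
  · intro k _; exact e.apply_symm_apply k

theorem card_shiftPF {α : Type} [Fintype α] (a s : ℕ) (hcard : Fintype.card α = s) :
    Nat.card {q : α → ℕ | (∀ k, a < q k ∧ q k ≤ a + s) ∧
      ∀ d, d ≤ s → d ≤ #(univ.filter fun k => q k ≤ a + d)} = (s+1)^(s-1) := by
  classical
  rw [← card_PF s]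
  apply Nat.card_congr
  have e0 : α ≃ Fin s := Fintype.equivFinOfCardEq hcard
  refine ⟨fun q => ⟨fun i => q.1 (e0.symm i) - a, ?_, ?_⟩,
    fun p => ⟨fun k => p.1 (e0 k) + a, ?_, ?_⟩, ?_, ?_⟩
  · intro i
    dsimp only
    have := q.2.1 (e0.symm i)
    omega
  · intro d hd
    have h2 := q.2.2 d hd
    rw [cnt]
    have h3 : #(univ.filter fun i : Fin s => q.1 (e0.symm i) - a ≤ d) =
        #(univ.filter fun k : α => q.1 k - a ≤ d) :=
      card_filter_comp e0.symm (fun k => q.1 k - a ≤ d)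
    rw [h3]
    have h4 : (univ.filter fun k : α => q.1 k - a ≤ d) =
        (univ.filter fun k : α => q.1 k ≤ a + d) := by
      apply filter_congr
      intro k _
      constructor <;> (intro hh; omega)
    rw [h4]
    exact h2
  · intro k
    dsimp only
    have := p.2.1 (e0 k)
    omega
  · intro d hd
    have h2 := p.2.2 d hd
    have h3 : #(univ.filter fun k : α => p.1 (e0 k) + a ≤ a + d) =
        #(univ.filter fun i : Fin s => p.1 i + a ≤ a + d) :=
      card_filter_comp e0 (fun i => p.1 i + a ≤ a + d)
    rw [h3]
    have h4 : (univ.filter fun i : Fin s => p.1 i + a ≤ a + d) =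
        (univ.filter fun i : Fin s => p.1 i ≤ d) := by
      apply filter_congr
      intro i _
      constructor <;> (intro hh; omega)
    rw [h4]
    exact h2
  · intro q
    apply Subtype.ext
    funext k
    simp only [Equiv.symm_apply_apply]
    have := q.2.1 k
    omega
  · intro p
    apply Subtype.ext
    funext i
    simp only [Equiv.apply_symm_apply]
    omega

def Ycond (g : Fin N → Fin (m+1)) (j : Fin (m+1)) (q : {k : Fin N // g k = j} → ℕ) : Prop :=
  (∀ k', off (sz g) j < q k' ∧ q k' ≤ off (sz g) j + sz g j) ∧
  ∀ d, d ≤ sz g j → d ≤ #(univ.filter fun k' : {k : Fin N // g k = j} => q k' ≤ off (sz g) j + d)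

def pidecomp (g : Fin N → Fin (m+1)) : (Fin N → ℕ) ≃ (∀ j : Fin (m+1), ({k : Fin N // g k = j} → ℕ)) where
  toFun c := fun _ k => c k.1
  invFun q := fun k => q (g k) ⟨k, rfl⟩
  left_inv c := rfl
  right_inv q := by
    funext j k
    rcases k with ⟨k, hk⟩
    subst hk
    rfl

lemma xpred_iff_ycond (g : Fin N → Fin (m+1)) (c : Fin N → ℕ) :
    Xpred g c ↔ ∀ j : Fin (m+1), Ycond g j (pidecomp g c j) := by
  classical
  constructor
  · intro hX j
    constructor
    · intro k'
      have := hX.1 k'.1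
      rw [k'.2] at this
      exact this
    · intro d hd
      have h2 := hX.2 j d hd
      rw [show (#(univ.filter fun k' : {k : Fin N // g k = j} =>
          (pidecomp g c j) k' ≤ off (sz g) j + d)) =
          #(univ.filter fun k => g k = j ∧ c k ≤ off (sz g) j + d) from
        card_subtype_filter (fun k => c k ≤ off (sz g) j + d)]
      exact h2
  · intro hY
    constructor
    · intro k
      exact (hY (g k)).1 ⟨k, rfl⟩
    · intro j d hd
      have h2 := (hY j).2 d hd
      rwa [show (#(univ.filter fun k' : {k : Fin N // g k = j} =>
          (pidecomp g c j) k' ≤ off (sz g) j + d)) =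
          #(univ.filter fun k => g k = j ∧ c k ≤ off (sz g) j + d) from
        card_subtype_filter (fun k => c k ≤ off (sz g) j + d)] at h2

theorem card_Xpred (g : Fin N → Fin (m+1)) :
    Nat.card {c : Fin N → ℕ | Xpred g c} = ∏ j : Fin (m+1), (sz g j + 1)^(sz g j - 1) := by
  classical
  have e1 : {c : Fin N → ℕ | Xpred g c} ≃ ∀ j : Fin (m+1), {q : {k : Fin N // g k = j} → ℕ // Ycond g j q} := by
    refine Equiv.trans ?_ (Equiv.subtypePiEquivPi (p := fun j q => Ycond g j q))
    exact (pidecomp g).subtypeEquiv (xpred_iff_ycond g)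
  rw [Nat.card_congr e1, Nat.card_pi]
  apply Finset.prod_congr rfl
  intro j _
  have : Nat.card {q : {k : Fin N // g k = j} → ℕ // Ycond g j q} =
      Nat.card {q : {k : Fin N // g k = j} → ℕ |
        (∀ k', off (sz g) j < q k' ∧ q k' ≤ off (sz g) j + sz g j) ∧
        ∀ d, d ≤ sz g j → d ≤ #(univ.filter fun k' => q k' ≤ off (sz g) j + d)} := rfl
  rw [this, card_shiftPF (off (sz g) j) (sz g j) ?_]
  rw [Fintype.card_subtype]
  rfl

section bridge

variable {L : ℕ} {u : Fin L → ℕ}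

lemma cnt_comp_perm (c : Fin L → ℕ) (σ : Equiv.Perm (Fin L)) (v : ℕ) :
    #(univ.filter fun i => c (σ i) ≤ v) = cnt c v := by
  rw [cnt]
  apply Finset.card_bij' (i := fun i _ => σ i) (j := fun k _ => σ.symm k)
  · intro i hi
    simp only [mem_filter, mem_univ, true_and] at hi ⊢
    exact hi
  · intro k hk
    simp only [mem_filter, mem_univ, true_and] at hk ⊢
    rw [Equiv.apply_symm_apply]
    exact hk
  · intro i _
    exact σ.symm_apply_apply i
  · intro k _
    exact σ.apply_symm_apply k

lemma mem_lhs_iff (hu : StrictMono u) (c : Fin L → ℕ) :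
    (∃ σ : Equiv.Perm (Fin L), Monotone (c ∘ σ) ∧ ∀ i, 1 ≤ c (σ i) ∧ c (σ i) ≤ u i) ↔
    ((∀ k, 1 ≤ c k) ∧ ∀ v, #(univ.filter fun i => u i ≤ v) ≤ cnt c v) := by
  constructor
  · rintro ⟨σ, hmon, hb⟩
    constructor
    · intro k
      have := (hb (σ.symm k)).1
      rwa [Equiv.apply_symm_apply] at this
    · intro v
      rw [← cnt_comp_perm c σ v]
      apply card_le_card
      intro i hi
      simp only [mem_filter, mem_univ, true_and] at hi ⊢
      exact le_trans (hb i).2 hi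
  · rintro ⟨h1, hcnt⟩
    refine ⟨Tuple.sort c, Tuple.monotone_sort c, fun i => ⟨h1 _, ?_⟩⟩
    by_contra hlt
    push_neg at hlt
    have hup : #(univ.filter fun i' => u i' ≤ u i) ≥ i.1 + 1 := by
      have hs : Finset.Iic i ⊆ univ.filter fun i' => u i' ≤ u i := by
        intro i' hi'
        simp only [Finset.mem_Iic] at hi'
        simp only [mem_filter, mem_univ, true_and]
        exact hu.monotone hi'
      have := card_le_card hs
      rwa [Fin.card_Iic] at this
    have hdn : cnt c (u i) ≤ i.1 := by
      rw [← cnt_comp_perm c (Tuple.sort c) (u i)]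
      have hs : (univ.filter fun i' => c (Tuple.sort c i') ≤ u i) ⊆ Finset.Iio i := by
        intro i' hi'
        simp only [mem_filter, mem_univ, true_and] at hi'
        simp only [Finset.mem_Iio]
        by_contra hge
        push_neg at hge
        have := Tuple.monotone_sort c hge
        simp only [Function.comp] at this
        omega
      have := card_le_card hs
      rwa [Fin.card_Iio] at this
    have := hcnt (u i)
    omega

end bridge

section tu

variable {n m : ℕ} {t : Fin m → ℕ} {u : Fin (n - m) → ℕ}
  (ht : StrictMono t) (htm : ∀ i, t i ∈ Finset.Icc 1 n)
  (hu : StrictMono u) (hum : ∀ j, u j ∈ Finset.Icc 1 n)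
  (hcompl : ∀ x ∈ Finset.Icc 1 n, (∃ i, t i = x) ↔ ¬ ∃ j, u j = x)

include ht htm hu hum hcompl

lemma count_compl : ∀ v, v ≤ n →
    #(univ.filter fun j : Fin m => t j ≤ v) + #(univ.filter fun i => u i ≤ v) = v := by
  intro v hv
  classical
  have himage : Finset.Icc 1 v =
      ((univ.filter fun j => t j ≤ v).image t) ∪ ((univ.filter fun i => u i ≤ v).image u) := by
    ext x
    simp only [mem_union, mem_image, mem_filter, mem_univ, true_and, Finset.mem_Icc]
    constructor
    · rintro ⟨hx1, hxv⟩
      have hxn : x ∈ Finset.Icc 1 n := by simp only [Finset.mem_Icc]; omega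
      by_cases hex : ∃ i, t i = x
      · obtain ⟨i, hi⟩ := hex
        exact Or.inl ⟨i, by omega, hi⟩
      · have hex' : ∃ j, u j = x := by
          by_contra hno
          exact hex ((hcompl x hxn).2 hno)
        obtain ⟨j, hj⟩ := hex'
        exact Or.inr ⟨j, by omega, hj⟩
    · rintro (⟨i, hi1, hi2⟩ | ⟨j, hj1, hj2⟩)
      · have := htm i
        simp only [Finset.mem_Icc] at this
        omega
      · have := hum j
        simp only [Finset.mem_Icc] at this
        omega
  have hdisj : Disjoint ((univ.filter fun j => t j ≤ v).image t)
      ((univ.filter fun i => u i ≤ v).image u) := by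
    rw [Finset.disjoint_left]
    intro x hx1 hx2
    simp only [mem_image, mem_filter, mem_univ, true_and] at hx1 hx2
    obtain ⟨i, hi1, hi2⟩ := hx1
    obtain ⟨j, hj1, hj2⟩ := hx2
    have hxn : x ∈ Finset.Icc 1 n := by
      have := htm i
      simp only [Finset.mem_Icc] at this ⊢
      omega
    exact ((hcompl x hxn).1 ⟨i, hi2⟩) ⟨j, hj2⟩
  have hcards := congrArg Finset.card himage
  rw [Nat.card_Icc, Finset.card_union_of_disjoint hdisj,
    Finset.card_image_of_injective _ ht.injective,
    Finset.card_image_of_injective _ hu.injective] at hcards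
  omega

lemma nm_eq : (n - m) + m = n := by
  have := count_compl ht htm hu hum hcompl n (le_refl n)
  have h1 : (univ.filter fun j : Fin m => t j ≤ n) = univ := by
    apply filter_true_of_mem
    intro j _
    have := htm j
    simp only [Finset.mem_Icc] at this
    omega
  have h2 : (univ.filter fun i : Fin (n - m) => u i ≤ n) = univ := by
    apply filter_true_of_mem
    intro j _
    have := hum j
    simp only [Finset.mem_Icc] at this
    omega
  rw [h1, h2, card_univ, card_univ, Fintype.card_fin, Fintype.card_fin] at this
  omega

lemma char_completion (c : Fin (n - m) → ℕ) :
    ((∀ k, 1 ≤ c k) ∧ ∀ v, #(univ.filter fun i => u i ≤ v) ≤ cnt c v) ↔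
    ((∀ k, 1 ≤ c k) ∧ (∀ k, c k ≤ (n - m) + m) ∧ W c (m+1) = (n - m) + m + 1 ∧
      ∀ j : Fin m, t j ≤ W c (j.1+1)) := by
  have hn := nm_eq ht htm hu hum hcompl
  have hUn : ∀ v, n ≤ v → #(univ.filter fun i : Fin (n - m) => u i ≤ v) = n - m := by
    intro v hv
    rw [filter_true_of_mem (fun i _ => by have := hum i; simp only [Finset.mem_Icc] at this; omega),
      card_univ, Fintype.card_fin]
  constructor
  · rintro ⟨h1, hcnt⟩
    have hub : ∀ k, c k ≤ (n - m) + m := by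
      intro k
      have h3 := hcnt n
      rw [hUn n (le_refl n)] at h3
      have h4 := cnt_le_card c n
      rw [Fintype.card_fin] at h4
      rw [hn]
      exact cnt_all (by rw [Fintype.card_fin]; omega) k
    refine ⟨h1, hub, ?_, ?_⟩
    · apply le_antisymm
      · apply W_le_of_mem
        have : cnt c ((n-m) + m + 1) = n - m := by
          rw [cnt_eq_card (fun k => by have := hub k; omega), Fintype.card_fin]
        omega
      · by_contra hcon
        push_neg at hcon
        have hWn : W c (m+1) ≤ (n-m) + m := by omega
        have hspec := W_spec c (m+1)
        set w := W c (m+1) with hw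
        have hcc := count_compl ht htm hu hum hcompl w (by omega)
        have hTle : #(univ.filter fun j : Fin m => t j ≤ w) ≤ m := by
          have hx := card_le_card (filter_subset (fun j : Fin m => t j ≤ w) univ)
          rwa [card_univ, Fintype.card_fin] at hx
        have hUc := hcnt w
        omega
    · intro j
      by_contra hcon
      push_neg at hcon
      have hspec := W_spec c (j.1+1)
      set w := W c (j.1+1) with hw
      have htjn := htm j
      simp only [Finset.mem_Icc] at htjn
      have hcc := count_compl ht htm hu hum hcompl w (by omega)
      have hTle : #(univ.filter fun j' : Fin m => t j' ≤ w) ≤ j.1 := by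
        have hs : (univ.filter fun j' : Fin m => t j' ≤ w) ⊆ Finset.Iio j := by
          intro j' hj'
          simp only [mem_filter, mem_univ, true_and] at hj'
          simp only [Finset.mem_Iio]
          by_contra hge
          push_neg at hge
          have := ht.monotone hge
          omega
        have := card_le_card hs
        rwa [Fin.card_Iio] at this
      have hUc := hcnt w
      omega
  · rintro ⟨h1, hub, htop, hW⟩
    refine ⟨h1, ?_⟩
    intro v
    rcases Nat.lt_or_ge v n with hv | hv
    · have hcc := count_compl ht htm hu hum hcompl v (by omega)
      have hTle : #(univ.filter fun j : Fin m => t j ≤ v) ≤ m := by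
        have hx := card_le_card (filter_subset (fun j : Fin m => t j ≤ v) univ)
        rwa [card_univ, Fintype.card_fin] at hx
      rcases Nat.lt_or_ge (#(univ.filter fun j : Fin m => t j ≤ v)) m with hj | hj
      · set jv := #(univ.filter fun j : Fin m => t j ≤ v) with hjv
        have hnt : ¬ (t ⟨jv, hj⟩ ≤ v) := by
          intro hcon
          have := (downset_mem_iff (p := fun j : Fin m => t j ≤ v)
            (fun a b hab hb => le_trans (ht.monotone hab) hb) ⟨jv, hj⟩).1 hcon
          simp only at this
          omega
        push_neg at hnt
        have hWj := hW ⟨jv, hj⟩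
        have hmin : v < cnt c v + (jv + 1) := W_min (by
          show v < W c ((⟨jv, hj⟩ : Fin m).1 + 1)
          omega)
        omega
      · have heq : #(univ.filter fun j : Fin m => t j ≤ v) = m := by omega
        have hmin : v < cnt c v + (m + 1) := W_min (by rw [htop]; omega)
        omega
    · rw [hUn v hv]
      have := cnt_mono c (show (n-m) + m ≤ v by omega)
      have h2 : cnt c ((n-m)+m) = n - m := by
        rw [cnt_eq_card hub, Fintype.card_fin]
      omega

end tu


end PCaux

open Finset PCaux in
/-- Theorem 1.1: the number of parking completions of `t` in `[n]` (sequences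
`c ∈ [n]^{n-m}` some rearrangement of which is weakly increasing with `i`-th
entry at most `u i`, where `u` is the increasing enumeration of `[n] \\ t`)
equals the sum, over all `ℓ ∈ ℕ^{m+1}` with `ℓ_1 + ⋯ + ℓ_j ≥ t_j - j` for
`j ∈ [m]` and total sum `n - m`, of `binom(n-m; ℓ) ∏_j (ℓ_j + 1)^{ℓ_j - 1}`. -/
theorem stmt7 (n m : ℕ) (t : Fin m → ℕ) (u : Fin (n - m) → ℕ)
    (ht : StrictMono t) (htm : ∀ i, t i ∈ Finset.Icc 1 n)
    (hu : StrictMono u) (hum : ∀ j, u j ∈ Finset.Icc 1 n)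
    (hcompl : ∀ x ∈ Finset.Icc 1 n, (∃ i, t i = x) ↔ ¬ ∃ j, u j = x) :
    Nat.card {c : Fin (n - m) → ℕ | ∃ σ : Equiv.Perm (Fin (n - m)),
        Monotone (c ∘ σ) ∧ ∀ i, 1 ≤ c (σ i) ∧ c (σ i) ≤ u i} =
      ∑ᶠ ℓ ∈ {ℓ : Fin (m + 1) → ℕ |
        (∀ j : Fin m, t j - (j.1 + 1) ≤
          ∑ i ∈ Finset.univ.filter (fun i : Fin (m + 1) => i.1 ≤ j.1), ℓ i) ∧
        ∑ i, ℓ i = n - m},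
      Nat.multinomial Finset.univ ℓ * ∏ i, (ℓ i + 1) ^ (ℓ i - 1) := by
  classical
  have hn : (n - m) + m = n := nm_eq ht htm hu hum hcompl
  have hset1 : {c : Fin (n - m) → ℕ | ∃ σ : Equiv.Perm (Fin (n - m)),
      Monotone (c ∘ σ) ∧ ∀ i, 1 ≤ c (σ i) ∧ c (σ i) ≤ u i} =
      {c : Fin (n-m) → ℕ | (∀ k, 1 ≤ c k) ∧ (∀ k, c k ≤ (n - m) + m) ∧
        W c (m+1) = (n - m) + m + 1 ∧ ∀ j : Fin m, t j ≤ W c (j.1+1)} := by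
    ext c
    simp only [Set.mem_setOf_eq]
    exact (mem_lhs_iff hu c).trans (char_completion ht htm hu hum hcompl c)
  rw [hset1]
  set SF : Finset (Fin (n-m) → ℕ) :=
    (Fintype.piFinset (fun _ : Fin (n-m) => Finset.Icc 1 ((n-m)+m))).filter
      (fun c => W c (m+1) = (n - m) + m + 1 ∧ ∀ j : Fin m, t j ≤ W c (j.1+1)) with hSF
  have hset2 : {c : Fin (n-m) → ℕ | (∀ k, 1 ≤ c k) ∧ (∀ k, c k ≤ (n - m) + m) ∧
        W c (m+1) = (n - m) + m + 1 ∧ ∀ j : Fin m, t j ≤ W c (j.1+1)} = ↑SF := by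
    ext c
    simp only [Set.mem_setOf_eq, hSF, coe_filter, Fintype.mem_piFinset, Finset.mem_Icc,
      Set.mem_setOf_eq]
    constructor
    · rintro ⟨a, b, c', d⟩; exact ⟨fun k => ⟨a k, b k⟩, c', d⟩
    · rintro ⟨ab, c', d⟩; exact ⟨fun k => (ab k).1, fun k => (ab k).2, c', d⟩
  rw [hset2, Nat.card_coe_set_eq, Set.ncard_coe_finset]
  set LF : Finset (Fin (m+1) → ℕ) :=
    (Fintype.piFinset (fun _ : Fin (m+1) => Finset.range ((n-m)+1))).filter
      (fun ℓ => (∀ j : Fin m, t j - (j.1 + 1) ≤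
          ∑ i ∈ Finset.univ.filter (fun i : Fin (m + 1) => i.1 ≤ j.1), ℓ i) ∧
        ∑ i, ℓ i = n - m) with hLF
  have hsetL : {ℓ : Fin (m + 1) → ℕ |
      (∀ j : Fin m, t j - (j.1 + 1) ≤
        ∑ i ∈ Finset.univ.filter (fun i : Fin (m + 1) => i.1 ≤ j.1), ℓ i) ∧
      ∑ i, ℓ i = n - m} = ↑LF := by
    ext ℓ
    simp only [Set.mem_setOf_eq, hLF, coe_filter, Fintype.mem_piFinset, Finset.mem_range,
      Set.mem_setOf_eq]
    constructor
    · rintro ⟨hc, hs⟩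
      refine ⟨fun i => ?_, hc, hs⟩
      have : ℓ i ≤ ∑ i', ℓ i' :=
        Finset.single_le_sum (f := ℓ) (fun _ _ => Nat.zero_le _) (mem_univ i)
      omega
    · rintro ⟨-, hc, hs⟩; exact ⟨hc, hs⟩
  rw [hsetL, finsum_mem_coe_finset]
  have hmaps : ∀ c ∈ SF, (gdef c : Fin (n-m) → Fin (m+1)) ∈
      (univ.filter fun g : Fin (n-m) → Fin (m+1) =>
        ∀ j : Fin m, t j ≤ (j.1+1) + psum (sz g) (j.1+1)) := by
    intro c hc
    simp only [hSF, mem_filter, Fintype.mem_piFinset, Finset.mem_Icc] at hc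
    obtain ⟨hbnd, htopc, hWc⟩ := hc
    have h1 : ∀ k, 1 ≤ c k := fun k => (hbnd k).1
    have h2 : ∀ k, c k ≤ (n-m) + m := fun k => (hbnd k).2
    have hX := Xpred_gdef h1 h2 htopc
    simp only [mem_filter, mem_univ, true_and]
    intro j
    have hW := W_of_Xpred hX (j.1+1) (by have := j.2; omega)
    have := hWc j
    omega
  rw [Finset.card_eq_sum_card_fiberwise hmaps]
  have hper : ∀ g ∈ (univ.filter fun g : Fin (n-m) → Fin (m+1) =>
      ∀ j : Fin m, t j ≤ (j.1+1) + psum (sz g) (j.1+1)),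
      #(SF.filter fun c => gdef c = g) = ∏ j : Fin (m+1), (sz g j + 1)^(sz g j - 1) := by
    intro g hg
    simp only [mem_filter, mem_univ, true_and] at hg
    have hXset : ↑(SF.filter fun c => gdef c = g) = {c : Fin (n-m) → ℕ | Xpred g c} := by
      ext c
      simp only [coe_filter, Set.mem_setOf_eq, hSF, mem_filter, Fintype.mem_piFinset,
        Finset.mem_Icc]
      constructor
      · rintro ⟨⟨hbnd, htopc, hWc⟩, hgd⟩
        have h1 : ∀ k, 1 ≤ c k := fun k => (hbnd k).1
        have h2 : ∀ k, c k ≤ (n-m) + m := fun k => (hbnd k).2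
        have hX := Xpred_gdef h1 h2 htopc
        rwa [hgd] at hX
      · intro hX
        have h1 := H1_of_Xpred hX
        have hgd := gdef_of_Xpred hX
        have hps : psum (sz g) (m+1) = n - m := by rw [psum_top _ (le_refl _), sum_sz]
        have h2 : ∀ k, c k ≤ (n-m) + m := by
          intro k
          have := val_bound_Xpred hX k
          omega
        have htopc : W c (m+1) = (n-m) + m + 1 := by
          have := W_of_Xpred hX (m+1) (le_refl _)
          omega
        refine ⟨⟨fun k => ⟨h1 k, h2 k⟩, htopc, ?_⟩, hgd⟩
        intro j
        have hW := W_of_Xpred hX (j.1+1) (by have := j.2; omega)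
        have := hg j
        omega
    have hnc := congrArg Set.ncard hXset
    rw [Set.ncard_coe_finset] at hnc
    rw [hnc, ← Nat.card_coe_set_eq, card_Xpred g]
  rw [Finset.sum_congr rfl hper]
  have hmaps2 : ∀ g ∈ (univ.filter fun g : Fin (n-m) → Fin (m+1) =>
      ∀ j : Fin m, t j ≤ (j.1+1) + psum (sz g) (j.1+1)), sz g ∈ LF := by
    intro g hg
    simp only [mem_filter, mem_univ, true_and] at hg
    simp only [hLF, mem_filter, Fintype.mem_piFinset, Finset.mem_range]
    have hsum := sum_sz g
    refine ⟨fun i => ?_, fun j => ?_, hsum⟩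
    · have : sz g i ≤ ∑ i', sz g i' :=
        Finset.single_le_sum (fun _ _ => Nat.zero_le _) (mem_univ i)
      omega
    · have heq : ∑ i ∈ univ.filter (fun i : Fin (m+1) => i.1 ≤ j.1), sz g i
          = psum (sz g) (j.1+1) := by
        rw [psum]
        apply Finset.sum_congr _ (fun _ _ => rfl)
        ext i
        simp only [mem_filter, mem_univ, true_and]
        omega
      rw [heq]
      have := hg j
      omega
  rw [← Finset.sum_fiberwise_of_maps_to hmaps2
    (fun g => ∏ j : Fin (m+1), (sz g j + 1)^(sz g j - 1))]
  apply Finset.sum_congr rfl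
  intro ℓ hℓ
  have hinner : ∀ g ∈ ((univ.filter fun g : Fin (n-m) → Fin (m+1) =>
      ∀ j : Fin m, t j ≤ (j.1+1) + psum (sz g) (j.1+1)).filter (fun g => sz g = ℓ)),
      (∏ j : Fin (m+1), (sz g j + 1)^(sz g j - 1)) = ∏ i, (ℓ i + 1)^(ℓ i - 1) := by
    intro g hg
    simp only [mem_filter] at hg
    rw [hg.2]
  rw [Finset.sum_congr rfl hinner, Finset.sum_const, smul_eq_mul]
  congr 1
  have hLmem := hℓ
  simp only [hLF, mem_filter, Fintype.mem_piFinset, Finset.mem_range] at hLmem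
  obtain ⟨hbd, hcon, hsum⟩ := hLmem
  have hfeq : ((univ.filter fun g : Fin (n-m) → Fin (m+1) =>
      ∀ j : Fin m, t j ≤ (j.1+1) + psum (sz g) (j.1+1)).filter (fun g => sz g = ℓ)) =
      univ.filter (fun g : Fin (n-m) → Fin (m+1) => sz g = ℓ) := by
    ext g
    simp only [mem_filter, mem_univ, true_and, and_iff_right_iff_imp]
    intro hszg j
    have heq : ∑ i ∈ univ.filter (fun i : Fin (m+1) => i.1 ≤ j.1), ℓ i
        = psum (sz g) (j.1+1) := by
      rw [psum, hszg]
      apply Finset.sum_congr _ (fun _ _ => rfl)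
      ext i
      simp only [mem_filter, mem_univ, true_and]
      omega
    have := hcon j
    omega
  rw [hfeq]
  have hmc := card_fiber_eq_multinomial (univ : Finset (Fin (m+1))) (Fin (n-m)) ℓ
    (by rw [Fintype.card_fin]; exact hsum)
  rw [Nat.card_eq_fintype_card, Fintype.card_subtype] at hmc
  rw [← hmc]
  congr 1
  apply filter_congr
  intro g _
  simp only [mem_univ, forall_const, true_and]
  constructor
  · intro hs
    refine ⟨fun _ => trivial, fun j => ?_⟩
    rw [← hs]
    rfl
  · rintro ⟨-, hs⟩
    funext j
    rw [sz]
    exact hs j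
end

section
/- For 1 ≤ m ≤ n, the sum over i from 0 to n−m of the number of parking completions of (i+1,...,i+m) in [n] equals (n+1)^{n−m}. -/
open Finset

namespace PC9

/-- counting function: number of entries of `c` that are `≤ l`. -/
def A {k : ℕ} (c : Fin k → ℕ) (l : ℕ) : ℕ :=
  (Finset.univ.filter fun j => c j ≤ l).card

/-- threshold function for block starting after `i`. -/
def V (m i l : ℕ) : ℕ := l - min m (l - i)

/-- the "parking completion" condition in counting form. -/
def Cond (k m i : ℕ) (c : Fin k → ℕ) : Prop :=
  (∀ j, 1 ≤ c j ∧ c j ≤ k + m) ∧ ∀ l ≤ k + m, V m i l ≤ A c l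

/-- the complement enumeration. -/
def u (m i : ℕ) {k : ℕ} (j : Fin k) : ℕ :=
  if (j : ℕ) + 1 ≤ i then (j : ℕ) + 1 else (j : ℕ) + 1 + m

lemma card_filter_le_fin {k : ℕ} (j : Fin k) :
    (Finset.univ.filter fun x : Fin k => x ≤ j).card = (j : ℕ) + 1 := by
  have h : (Finset.univ.filter fun x : Fin k => x ≤ j) = Finset.Iic j := by
    ext x; simp
  rw [h, Fin.card_Iic]

lemma card_filter_lt_fin {k : ℕ} (j : Fin k) :
    (Finset.univ.filter fun x : Fin k => x < j).card = (j : ℕ) := by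
  have h : (Finset.univ.filter fun x : Fin k => x < j) = Finset.Iio j := by
    ext x; simp
  rw [h, Fin.card_Iio]

/-- reindexing a count by a permutation. -/
lemma A_comp_perm {k : ℕ} (c : Fin k → ℕ) (σ : Equiv.Perm (Fin k)) (l : ℕ) :
    A (c ∘ σ) l = A c l := by
  unfold A
  apply Finset.card_bij (fun j _ => σ j)
  · intro a ha; simp only [mem_filter, mem_univ, true_and, Function.comp_apply] at *; exact ha
  · intro a _ b _ h; exact σ.injective h
  · intro b hb
    refine ⟨σ.symm b, ?_, by simp⟩
    simp only [mem_filter, mem_univ, true_and, Function.comp_apply, Equiv.apply_symm_apply] at *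
    exact hb

lemma u_mono {k m i : ℕ} : Monotone (u m i (k := k)) := by
  intro a b hab
  unfold u
  have h : (a : ℕ) ≤ b := hab
  split_ifs <;> omega

/-- number of thresholds `≤ l`. -/
lemma card_u_le {k m : ℕ} (i l : ℕ) (hi : i ≤ k) (hl : l ≤ k + m) :
    (Finset.univ.filter fun j : Fin k => u m i j ≤ l).card = V m i l := by
  have h1 : (Finset.univ.filter fun j : Fin k => u m i j ≤ l).card
      = ((Finset.range k).filter fun j => (if j + 1 ≤ i then j + 1 else j + 1 + m) ≤ l).card := by
    rw [Finset.card_filter, Finset.card_filter]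
    exact Fin.sum_univ_eq_sum_range
      (fun j => if (if j + 1 ≤ i then j + 1 else j + 1 + m) ≤ l then 1 else 0) k
  rw [h1]
  have h2 : ((Finset.range k).filter fun j => (if j + 1 ≤ i then j + 1 else j + 1 + m) ≤ l)
      = Finset.range (min i l) ∪ Finset.Ico i (min (l - m) k) := by
    ext x
    simp only [Finset.mem_filter, Finset.mem_range, Finset.mem_union, Finset.mem_Ico]
    split_ifs <;> omega
  rw [h2, Finset.card_union_of_disjoint, Finset.card_range, Nat.card_Ico]
  · unfold V; omega
  · rw [Finset.disjoint_left]; intro x hx hx'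
    simp only [Finset.mem_range, Finset.mem_Ico] at hx hx'
    omega

/-- sorting lemma: the ∃-permutation form is equivalent to the counting form. -/
lemma sort_iff {k m : ℕ} (i : ℕ) (hi : i ≤ k) (c : Fin k → ℕ) :
    (∃ σ : Equiv.Perm (Fin k), Monotone (c ∘ σ) ∧ ∀ j, 1 ≤ c (σ j) ∧
        c (σ j) ≤ u m i j) ↔ Cond k m i c := by
  constructor
  · rintro ⟨σ, hmono, hb⟩
    constructor
    · intro j
      obtain ⟨h1, h2⟩ := hb (σ.symm j)
      rw [Equiv.apply_symm_apply] at h1 h2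
      refine ⟨h1, h2.trans ?_⟩
      unfold u
      have := (σ.symm j).isLt
      split_ifs <;> omega
    · intro l hl
      rw [← card_u_le i l hi hl, ← A_comp_perm c σ l]
      apply Finset.card_le_card
      intro j hj
      simp only [mem_filter, mem_univ, true_and, Function.comp_apply] at *
      exact le_trans (hb j).2 hj
  · rintro ⟨hpos, hcount⟩
    refine ⟨Tuple.sort c, Tuple.monotone_sort c, fun j => ⟨(hpos _).1, ?_⟩⟩
    by_contra hgt
    push_neg at hgt
    have hu_le : u m i j ≤ k + m := by
      unfold u; have := j.isLt; split_ifs <;> omega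
    have h0 : (j : ℕ) + 1 ≤ V m i (u m i j) := by
      rw [← card_u_le i (u m i j) hi hu_le, ← card_filter_le_fin j]
      apply Finset.card_le_card
      intro x hx
      simp only [mem_filter, mem_univ, true_and] at *
      exact u_mono hx
    have h1 : (j : ℕ) + 1 ≤ A c (u m i j) := le_trans h0 (hcount _ hu_le)
    have h2 : A (c ∘ (Tuple.sort c)) (u m i j) = A c (u m i j) := A_comp_perm c (Tuple.sort c) _
    have h3 : (Finset.univ.filter fun x => (c ∘ (Tuple.sort c)) x ≤ u m i j)
        ⊆ Finset.univ.filter fun x : Fin k => x < j := by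
      intro x hx
      simp only [mem_filter, mem_univ, true_and, Function.comp_apply] at *
      by_contra hxj
      push_neg at hxj
      have hmx := Tuple.monotone_sort c hxj
      simp only [Function.comp_apply] at hmx
      omega
    have h4 := Finset.card_le_card h3
    rw [card_filter_lt_fin] at h4
    rw [← h2] at h1
    unfold A at h1
    omega



/-- prefix-sum function on the circle. -/
def G (kk : ℕ) (D : ℕ → ℕ) (t : ℕ) : ℤ := (D t : ℤ) - (min t kk : ℕ)

/-- Abstract translation lemma: the threshold condition for the shifted sequence
is equivalent to `k+1-i` being the least argmin of `G`. -/
lemma translate (k m i : ℕ) (D : ℕ → ℕ) (hD : Monotone D)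
    (hD0 : D 0 = 0) (hDtop : D (k + m + 1) = k) (hi : i ≤ k) :
    (D (k + 1 - i) ≤ D (k - i) ∧
      ∀ l ≤ k + m, V m i l ≤
        D (min (l + (k + 1 - i)) (k + m + 1)) - D (k - i) + D (l + (k + 1 - i) - (k + m + 1)))
    ↔ ((∀ t ≤ k + m + 1, G (k + 1) D (k + 1 - i) ≤ G (k + 1) D t) ∧
       (∀ t < k + 1 - i, G (k + 1) D (k + 1 - i) < G (k + 1) D t)) := by
  have hmono1 : D (k - i) ≤ D (k + 1 - i) := hD (by omega)
  have hDki : D (k - i) ≤ k := hDtop ▸ hD (by omega)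
  constructor
  · rintro ⟨hpos, hA⟩
    -- key consequence: D (k - i) ≤ k - i
    have hAe := hA (m + i) (by omega)
    rw [show min (m + i + (k + 1 - i)) (k + m + 1) = k + m + 1 from by omega, hDtop,
        show m + i + (k + 1 - i) - (k + m + 1) = 0 from by omega, hD0] at hAe
    have hVe : V m i (m + i) = i := by unfold V; omega
    rw [hVe] at hAe
    have hstrict : ∀ t < k + 1 - i, G (k + 1) D (k + 1 - i) < G (k + 1) D t := by
      intro t ht
      rcases Nat.eq_zero_or_pos t with rfl | htpos
      · unfold G; rw [hD0]; omega
      · have h := hA (t + m + i) (by omega)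
        rw [show min (t + m + i + (k + 1 - i)) (k + m + 1) = k + m + 1 from by omega, hDtop,
            show t + m + i + (k + 1 - i) - (k + m + 1) = t from by omega] at h
        have hV : V m i (t + m + i) = t + i := by unfold V; omega
        rw [hV] at h
        unfold G
        omega
    refine ⟨?_, hstrict⟩
    intro t ht
    rcases le_or_gt (k + 1 - i) t with hrt | hrt
    · have h := hA (t - (k + 1 - i)) (by omega)
      rw [show min (t - (k + 1 - i) + (k + 1 - i)) (k + m + 1) = t from by omega,
          show t - (k + 1 - i) + (k + 1 - i) - (k + m + 1) = 0 from by omega, hD0] at h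
      have hmt : D (k - i) ≤ D t := hD (by omega)
      unfold V at h
      unfold G
      omega
    · exact le_of_lt (hstrict t hrt)
  · rintro ⟨hle, hlt⟩
    have hpos : D (k + 1 - i) ≤ D (k - i) := by
      have h := hlt (k - i) (by omega)
      unfold G at h
      omega
    refine ⟨hpos, ?_⟩
    intro l hl
    rcases le_or_gt (l + (k + 1 - i)) (k + m + 1) with hc | hc
    · have h := hle (l + (k + 1 - i)) (by omega)
      rw [show min (l + (k + 1 - i)) (k + m + 1) = l + (k + 1 - i) from by omega,
          show l + (k + 1 - i) - (k + m + 1) = 0 from by omega, hD0]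
      have hmt : D (k - i) ≤ D (l + (k + 1 - i)) := hD (by omega)
      unfold G at h
      unfold V
      omega
    · have h := hlt (l + (k + 1 - i) - (k + m + 1)) (by omega)
      rw [show min (l + (k + 1 - i)) (k + m + 1) = k + m + 1 from by omega, hDtop]
      have hmt : D (l + (k + 1 - i) - (k + m + 1)) ≤ D (k - i) := hD (by omega)
      unfold G at h
      unfold V
      omega

/-- existence and uniqueness of the least argmin, landing in `[0,k]` after recoding. -/
lemma exists_unique_least (k m : ℕ) (D : ℕ → ℕ) (hD : Monotone D)
    (hD0 : D 0 = 0) (hDtop : D (k + m + 1) = k) :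
    ∃! i, i ≤ k ∧ (∀ t ≤ k + m + 1, G (k + 1) D (k + 1 - i) ≤ G (k + 1) D t) ∧
       (∀ t < k + 1 - i, G (k + 1) D (k + 1 - i) < G (k + 1) D t) := by
  have hP : ∃ t, t ≤ k + m + 1 ∧ ∀ s ≤ k + m + 1, G (k + 1) D t ≤ G (k + 1) D s := by
    obtain ⟨r0, hr0, hmin⟩ := Finset.exists_min_image (Finset.range (k + m + 2))
      (G (k + 1) D) ⟨0, by simp⟩
    exact ⟨r0, by have := Finset.mem_range.mp hr0; omega,
      fun s hs => hmin s (Finset.mem_range.mpr (by omega))⟩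
  obtain ⟨hrle, hrmin⟩ := Nat.find_spec hP
  set r := Nat.find hP with hrdef
  have hstrict : ∀ t < r, G (k + 1) D r < G (k + 1) D t := by
    intro t htr
    by_contra hcon
    push_neg at hcon
    exact Nat.find_min hP htr ⟨by omega, fun s hs => le_trans hcon (hrmin s hs)⟩
  have hr1 : 1 ≤ r := by
    by_contra h0
    have := hrmin (k + m + 1) le_rfl
    unfold G at this
    rw [show r = 0 from by omega, hD0, hDtop] at this
    omega
  have hr2 : r ≤ k + 1 := by
    by_contra hbig
    push_neg at hbig
    have h := hstrict (r - 1) (by omega)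
    have hm : D (r - 1) ≤ D r := hD (by omega)
    unfold G at h
    omega
  refine ⟨k + 1 - r, ⟨by omega, ?_, ?_⟩, ?_⟩
  · rw [show k + 1 - (k + 1 - r) = r from by omega]; exact hrmin
  · rw [show k + 1 - (k + 1 - r) = r from by omega]; exact hstrict
  · rintro i' ⟨hi', h1', h2'⟩
    have hr' : k + 1 - i' ≤ k + m + 1 := by omega
    rcases lt_trichotomy (k + 1 - i') r with h | h | h
    · have ha := hstrict (k + 1 - i') h
      have hb := h1' r (by omega)
      omega
    · omega
    · have ha := h2' r h
      have hb := hrmin (k + 1 - i') hr'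
      omega



/-- counting function for `d`. -/
def Dc {k n : ℕ} (d : Fin k → Fin n) (t : ℕ) : ℕ :=
  (Finset.univ.filter fun j => (d j : ℕ) < t).card

lemma Dc_mono {k n : ℕ} (d : Fin k → Fin n) : Monotone (Dc d) := by
  intro a b hab
  apply Finset.card_le_card
  intro j hj
  simp only [mem_filter, mem_univ, true_and] at *
  omega

lemma Dc_zero {k n : ℕ} (d : Fin k → Fin n) : Dc d 0 = 0 := by
  simp [Dc]

lemma Dc_top {k n : ℕ} (d : Fin k → Fin n) (t : ℕ) (ht : n ≤ t) : Dc d t = k := by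
  unfold Dc
  rw [Finset.filter_true_of_mem, Finset.card_univ, Fintype.card_fin]
  intro j _
  have := (d j).isLt
  omega

/-- segment counting. -/
lemma Dc_seg {k n : ℕ} (d : Fin k → Fin n) (α β : ℕ) (hab : α ≤ β) :
    (Finset.univ.filter fun j => α ≤ (d j : ℕ) ∧ (d j : ℕ) < β).card = Dc d β - Dc d α := by
  have hsplit : (Finset.univ.filter fun j : Fin k => (d j : ℕ) < β)
      = (Finset.univ.filter fun j => (d j : ℕ) < α)
        ∪ (Finset.univ.filter fun j => α ≤ (d j : ℕ) ∧ (d j : ℕ) < β) := by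
    ext x
    simp only [mem_filter, mem_univ, true_and, mem_union]
    omega
  have hdisj : Disjoint (Finset.univ.filter fun j : Fin k => (d j : ℕ) < α)
      (Finset.univ.filter fun j => α ≤ (d j : ℕ) ∧ (d j : ℕ) < β) := by
    rw [Finset.disjoint_left]
    intro x hx hx'
    simp only [mem_filter, mem_univ, true_and] at hx hx'
    omega
  have := Finset.card_union_of_disjoint hdisj
  rw [← hsplit] at this
  unfold Dc
  omega

/-- the shifted sequence. -/
def cOf (m i : ℕ) {k : ℕ} (d : Fin k → Fin (k + m + 1)) : Fin k → ℕ :=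
  fun j => ((d j : ℕ) + (i + m + 1)) % (k + m + 1)

lemma mod_helper (M x : ℕ) (hM : 0 < M) (hx : x < 2 * M) :
    x % M = if x < M then x else x - M := by
  split_ifs with h
  · exact Nat.mod_eq_of_lt h
  · rw [Nat.mod_eq_sub_mod (by omega), Nat.mod_eq_of_lt (by omega)]

lemma cOf_eq (m i : ℕ) {k : ℕ} (d : Fin k → Fin (k + m + 1)) (hi : i ≤ k) (j : Fin k) :
    cOf m i d j = if (d j : ℕ) < k - i then (d j : ℕ) + (i + m + 1)
      else (d j : ℕ) + (i + m + 1) - (k + m + 1) := by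
  have hlt := (d j).isLt
  unfold cOf
  rw [mod_helper _ _ (by omega) (by omega)]
  split_ifs <;> omega

lemma cOf_le (m i : ℕ) {k : ℕ} (d : Fin k → Fin (k + m + 1)) (hi : i ≤ k) (j : Fin k) :
    cOf m i d j ≤ k + m := by
  have hlt := (d j).isLt
  rw [cOf_eq m i d hi j]
  split_ifs <;> omega

lemma pos_iff (m i : ℕ) {k : ℕ} (d : Fin k → Fin (k + m + 1)) (hi : i ≤ k) :
    (∀ j, 1 ≤ cOf m i d j) ↔ Dc d (k + 1 - i) ≤ Dc d (k - i) := by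
  constructor
  · intro h
    apply Finset.card_le_card
    intro x hx
    simp only [Dc, mem_filter, mem_univ, true_and] at hx ⊢
    have hc := h x
    rw [cOf_eq m i d hi x] at hc
    have hlt := (d x).isLt
    split_ifs at hc <;> omega
  · intro h j
    have hsub : (Finset.univ.filter fun x : Fin k => (d x : ℕ) < k - i)
        ⊆ (Finset.univ.filter fun x : Fin k => (d x : ℕ) < k + 1 - i) := by
      intro x hx
      simp only [mem_filter, mem_univ, true_and] at *
      omega
    have heq := Finset.eq_of_subset_of_card_le hsub h
    rw [cOf_eq m i d hi j]
    have hlt := (d j).isLt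
    by_cases hdj : (d j : ℕ) = k - i
    · exfalso
      have hj2 : j ∈ Finset.univ.filter fun x : Fin k => (d x : ℕ) < k + 1 - i := by
        simp only [mem_filter, mem_univ, true_and]; omega
      rw [← heq] at hj2
      simp only [mem_filter, mem_univ, true_and] at hj2
      omega
    · split_ifs <;> omega

lemma A_eq (m i : ℕ) {k : ℕ} (d : Fin k → Fin (k + m + 1)) (hi : i ≤ k)
    (l : ℕ) (hl : l ≤ k + m) :
    A (cOf m i d) l = Dc d (min (l + (k + 1 - i)) (k + m + 1)) - Dc d (k - i)
      + Dc d (l + (k + 1 - i) - (k + m + 1)) := by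
  have hsplit : (Finset.univ.filter fun j : Fin k => cOf m i d j ≤ l)
      = (Finset.univ.filter fun j =>
          k - i ≤ (d j : ℕ) ∧ (d j : ℕ) < min (l + (k + 1 - i)) (k + m + 1))
        ∪ (Finset.univ.filter fun j => (d j : ℕ) < l + (k + 1 - i) - (k + m + 1)) := by
    ext x
    simp only [mem_filter, mem_univ, true_and, mem_union]
    rw [cOf_eq m i d hi x]
    have hlt := (d x).isLt
    split_ifs <;> omega
  have hdisj : Disjoint (Finset.univ.filter fun j : Fin k =>
          k - i ≤ (d j : ℕ) ∧ (d j : ℕ) < min (l + (k + 1 - i)) (k + m + 1))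
        (Finset.univ.filter fun j => (d j : ℕ) < l + (k + 1 - i) - (k + m + 1)) := by
    rw [Finset.disjoint_left]
    intro x hx hx'
    simp only [mem_filter, mem_univ, true_and] at hx hx'
    omega
  unfold A
  rw [hsplit, Finset.card_union_of_disjoint hdisj, Dc_seg d _ _ (by omega)]
  rfl


lemma cond_iff (k m i : ℕ) (hi : i ≤ k) (d : Fin k → Fin (k + m + 1)) :
    Cond k m i (cOf m i d) ↔
      ((∀ t ≤ k + m + 1, G (k + 1) (Dc d) (k + 1 - i) ≤ G (k + 1) (Dc d) t) ∧
       (∀ t < k + 1 - i, G (k + 1) (Dc d) (k + 1 - i) < G (k + 1) (Dc d) t)) := by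
  rw [← translate k m i (Dc d) (Dc_mono d) (Dc_zero d) (Dc_top d _ le_rfl) hi]
  unfold Cond
  constructor
  · rintro ⟨h1, h2⟩
    refine ⟨(pos_iff m i d hi).1 (fun j => (h1 j).1), fun l hl => ?_⟩
    rw [← A_eq m i d hi l hl]; exact h2 l hl
  · rintro ⟨h1, h2⟩
    refine ⟨fun j => ⟨(pos_iff m i d hi).2 h1 j, cOf_le m i d hi j⟩, fun l hl => ?_⟩
    rw [A_eq m i d hi l hl]; exact h2 l hl

lemma exists_unique_cond (k m : ℕ) (d : Fin k → Fin (k + m + 1)) :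
    ∃! i, i ≤ k ∧ Cond k m i (cOf m i d) := by
  obtain ⟨i0, ⟨hi0, h1, h2⟩, huniq⟩ :=
    exists_unique_least k m (Dc d) (Dc_mono d) (Dc_zero d) (Dc_top d _ le_rfl)
  refine ⟨i0, ⟨hi0, (cond_iff k m i0 hi0 d).2 ⟨h1, h2⟩⟩, ?_⟩
  rintro i' ⟨hi', hc'⟩
  obtain ⟨ha, hb⟩ := (cond_iff k m i' hi' d).1 hc'
  exact huniq i' ⟨hi', ha, hb⟩

theorem key (k m : ℕ) :
    ∑ i ∈ Finset.range (k + 1),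
      Nat.card {c : Fin k → ℕ | ∃ σ : Equiv.Perm (Fin k),
        Monotone (c ∘ σ) ∧ ∀ j, 1 ≤ c (σ j) ∧
          c (σ j) ≤ (if (j : ℕ) + 1 ≤ i then (j : ℕ) + 1 else (j : ℕ) + 1 + m)} =
      (k + m + 1) ^ k := by
  classical
  have hstep : ∀ i ∈ Finset.range (k + 1),
      Nat.card {c : Fin k → ℕ | ∃ σ : Equiv.Perm (Fin k),
        Monotone (c ∘ σ) ∧ ∀ j, 1 ≤ c (σ j) ∧
          c (σ j) ≤ (if (j : ℕ) + 1 ≤ i then (j : ℕ) + 1 else (j : ℕ) + 1 + m)}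
      = (Finset.univ.filter
          fun d : Fin k → Fin (k + m + 1) => Cond k m i (cOf m i d)).card := by
    intro i hi
    rw [Finset.mem_range] at hi
    have hik : i ≤ k := by omega
    have hset : {c : Fin k → ℕ | ∃ σ : Equiv.Perm (Fin k),
        Monotone (c ∘ σ) ∧ ∀ j, 1 ≤ c (σ j) ∧
          c (σ j) ≤ (if (j : ℕ) + 1 ≤ i then (j : ℕ) + 1 else (j : ℕ) + 1 + m)}
        = {c : Fin k → ℕ | Cond k m i c} :=
      Set.ext fun c => sort_iff i hik c
    rw [hset]
    -- pass to bounded functions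
    have e : {c : Fin k → ℕ | Cond k m i c} ≃
        {d : Fin k → Fin (k + m + 1) // Cond k m i (fun j => (d j : ℕ))} :=
      { toFun := fun c => ⟨fun j => ⟨c.1 j, by have := (c.2.1 j).2; omega⟩, c.2⟩
        invFun := fun d => ⟨fun j => (d.1 j : ℕ), d.2⟩
        left_inv := fun c => rfl
        right_inv := fun d => rfl }
    rw [Nat.card_congr e, Nat.card_eq_fintype_card, Fintype.card_subtype]
    -- shift bijection
    set c0 : Fin (k + m + 1) := ⟨(i + m + 1) % (k + m + 1), Nat.mod_lt _ (by omega)⟩ with hc0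
    have hval : ∀ (d : Fin k → Fin (k + m + 1)) (j : Fin k),
        ((d j + c0 : Fin (k + m + 1)) : ℕ) = cOf m i d j := by
      intro d j
      rw [Fin.val_add, hc0]
      show ((d j : ℕ) + (i + m + 1) % (k + m + 1)) % (k + m + 1) = _
      rw [Nat.add_mod_mod]
      rfl
    symm
    apply Finset.card_bij (fun d _ => fun j => d j + c0)
    · intro d hd
      simp only [Finset.mem_filter, Finset.mem_univ, true_and] at *
      have : (fun j => (((fun j => d j + c0) j : Fin (k + m + 1)) : ℕ)) = cOf m i d := by
        funext j; exact hval d j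
      rw [this]
      exact hd
    · intro a _ b _ h
      funext j
      have := congrFun h j
      exact add_right_cancel this
    · intro e he
      simp only [Finset.mem_filter, Finset.mem_univ, true_and] at he
      refine ⟨fun j => e j - c0, ?_, ?_⟩
      · simp only [Finset.mem_filter, Finset.mem_univ, true_and]
        have : cOf m i (fun j => e j - c0) = fun j => (e j : ℕ) := by
          funext j
          rw [← hval (fun j => e j - c0) j]
          simp
        rw [this]
        exact he
      · funext j; simp
  rw [Finset.sum_congr rfl hstep]
  have hswap : ∑ i ∈ Finset.range (k + 1),
      (Finset.univ.filter
        fun d : Fin k → Fin (k + m + 1) => Cond k m i (cOf m i d)).card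
      = ∑ d : Fin k → Fin (k + m + 1),
          ((Finset.range (k + 1)).filter fun i => Cond k m i (cOf m i d)).card := by
    simp_rw [Finset.card_filter]
    rw [Finset.sum_comm]
  rw [hswap]
  have hone : ∀ d : Fin k → Fin (k + m + 1),
      ((Finset.range (k + 1)).filter fun i => Cond k m i (cOf m i d)).card = 1 := by
    intro d
    obtain ⟨i0, ⟨hi0, hc0⟩, huniq⟩ := exists_unique_cond k m d
    rw [Finset.card_eq_one]
    refine ⟨i0, ?_⟩
    ext x
    simp only [Finset.mem_filter, Finset.mem_range, Finset.mem_singleton]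
    constructor
    · rintro ⟨hx1, hx2⟩; exact huniq x ⟨by omega, hx2⟩
    · rintro rfl; exact ⟨by omega, hc0⟩
  simp only [hone, Finset.sum_const, Finset.card_univ, smul_eq_mul, mul_one]
  rw [Fintype.card_fun, Fintype.card_fin, Fintype.card_fin]


end PC9

/-- Proposition 4.5: for `1 ≤ m ≤ n`, summing the number of parking completions
of the block `(i+1, …, i+m)` in `[n]` (encoded via the complement enumeration
`u j = j` for `j ≤ i`, `u j = j + m` for `j > i`) over `i = 0, …, n - m`
gives `(n+1)^{n-m}`. -/
theorem stmt9 (n m : ℕ) (hm : 1 ≤ m) (hmn : m ≤ n) :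
    ∑ i ∈ Finset.range (n - m + 1),
      Nat.card {c : Fin (n - m) → ℕ | ∃ σ : Equiv.Perm (Fin (n - m)),
        Monotone (c ∘ σ) ∧ ∀ j, 1 ≤ c (σ j) ∧
          c (σ j) ≤ (if j.1 + 1 ≤ i then j.1 + 1 else j.1 + 1 + m)} =
      (n + 1) ^ (n - m) := by
  have h2 : (n - m + m + 1) ^ (n - m) = (n + 1) ^ (n - m) := by
    congr 1
    omega
  exact (PC9.key (n - m) m).trans h2
end

section
/- For ℓ ≤ n, the number of parking completions of t = (1, 2, ..., ℓ) in [n] equals (ℓ+1)·(n+1)^{n−ℓ−1}. -/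
open Finset

namespace PC

/-- Partial sums `S w = w - ∑_{v<w} f v`. -/
def S (f : ℕ → ℕ) (w : ℕ) : ℤ := w - ∑ v ∈ Finset.range w, (f v : ℤ)

/-- Running maximum of `S` on `[0, w]`. -/
def M (f : ℕ → ℕ) (w : ℕ) : ℤ :=
  (Finset.range (w + 1)).sup' (by simp) (S f)

/-- `w` is a strict record position of `S`. -/
def Rec (f : ℕ → ℕ) (w : ℕ) : Prop := ∀ j < w, S f j < S f w

instance (f : ℕ → ℕ) (w : ℕ) : Decidable (Rec f w) := Nat.decidableBallLT _ _

lemma S_zero (f : ℕ → ℕ) : S f 0 = 0 := by simp [S]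

lemma S_succ (f : ℕ → ℕ) (w : ℕ) : S f (w + 1) = S f w + 1 - f w := by
  simp [S, Finset.sum_range_succ]; ring

lemma S_succ_le (f : ℕ → ℕ) (w : ℕ) : S f (w + 1) ≤ S f w + 1 := by
  have := S_succ f w
  have : (0:ℤ) ≤ f w := Int.natCast_nonneg _
  omega

section periodic

variable {f : ℕ → ℕ} {N m : ℕ} (hf : ∀ v, f (v + N) = f v)
  (hs : ∑ v ∈ Finset.range N, f v = m)

include hf hs in
lemma sum_Ico_period : ∀ w, ∑ v ∈ Finset.Ico w (w + N), f v = m := by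
  intro w
  induction w with
  | zero => simpa using hs
  | succ w ih =>
    rcases Nat.eq_zero_or_pos N with h0 | h0
    · simp [h0] at hs ⊢; omega
    · have h1 : ∑ v ∈ Finset.Ico w (w + N), f v
          = f w + ∑ v ∈ Finset.Ico (w+1) (w + N), f v := by
        rw [← Finset.sum_eq_sum_Ico_succ_bot (by omega)]
      have h2 : ∑ v ∈ Finset.Ico (w+1) (w + 1 + N), f v
          = (∑ v ∈ Finset.Ico (w+1) (w + N), f v) + f (w + N) := by
        have : w + 1 + N = (w + N) + 1 := by omega
        rw [this, Finset.sum_Ico_succ_top (by omega)]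
      rw [h2, hf w] at *
      omega

include hf hs in
lemma S_shift (w : ℕ) : S f (w + N) = S f w + ((N : ℤ) - m) := by
  have h := Finset.sum_Ico_eq_sub (fun v => (f v : ℤ)) (by omega : w ≤ w + N)
  have h2 : ∑ v ∈ Finset.Ico w (w + N), (f v : ℤ) = (m : ℤ) := by
    have := sum_Ico_period hf hs w
    exact_mod_cast congrArg (Nat.cast : ℕ → ℤ) this
  have key : ∑ v ∈ Finset.range (w + N), (f v : ℤ)
      = ∑ v ∈ Finset.range w, (f v : ℤ) + m := by
    rw [← h2, h]; ring
  simp only [S]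
  push_cast
  omega

include hf hs in
lemma S_shift_mul (w q : ℕ) : S f (w + q * N) = S f w + q * ((N : ℤ) - m) := by
  induction q with
  | zero => simp
  | succ q ih =>
    have : w + (q + 1) * N = (w + q * N) + N := by ring
    rw [this, S_shift hf hs, ih]
    push_cast
    ring

end periodic

lemma le_M {f : ℕ → ℕ} {j w : ℕ} (h : j ≤ w) : S f j ≤ M f w :=
  Finset.le_sup' (S f) (by simp [Finset.mem_range]; omega)

lemma M_le {f : ℕ → ℕ} {w : ℕ} {x : ℤ} (h : ∀ j ≤ w, S f j ≤ x) : M f w ≤ x :=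
  Finset.sup'_le _ _ fun j hj => h j (by simpa [Nat.lt_succ_iff] using hj)

lemma M_succ (f : ℕ → ℕ) (w : ℕ) : M f (w + 1) = max (S f (w + 1)) (M f w) := by
  apply le_antisymm
  · apply M_le
    intro j hj
    rcases Nat.lt_or_ge j (w + 1) with h | h
    · exact le_trans (le_M (by omega)) (le_max_right _ _)
    · have : j = w + 1 := by omega
      subst this; exact le_max_left _ _
  · apply max_le (le_M (le_refl _)) (M_le fun j hj => le_M (by omega))

lemma M_succ_of_rec {f : ℕ → ℕ} {w : ℕ} (h : Rec f (w + 1)) :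
    M f (w + 1) = M f w + 1 := by
  have h1 : M f w < S f (w + 1) := by
    have : ∀ j ≤ w, S f j ≤ S f (w+1) - 1 := fun j hj => by
      have := h j (by omega); omega
    have := M_le this; omega
  have h2 : S f (w + 1) ≤ M f w + 1 := le_trans (S_succ_le f w) (by
    have := le_M (f := f) (le_refl w); omega)
  rw [M_succ]
  omega

lemma M_succ_of_not_rec {f : ℕ → ℕ} {w : ℕ} (h : ¬ Rec f (w + 1)) :
    M f (w + 1) = M f w := by
  rw [Rec] at h
  push_neg at h
  obtain ⟨j, hj, hSj⟩ := h
  have : S f (w + 1) ≤ M f w := le_trans hSj (le_M (by omega))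
  rw [M_succ]
  omega

lemma M_count (f : ℕ → ℕ) (N : ℕ) :
    ∀ t, M f (N + t) = M f N +
      ((Finset.Ico (N + 1) (N + t + 1)).filter (Rec f)).card := by
  intro t
  induction t with
  | zero => simp
  | succ t ih =>
    have hins : Finset.Ico (N + 1) (N + t + 1 + 1)
        = insert (N + t + 1) (Finset.Ico (N + 1) (N + t + 1)) := by
      exact Nat.Ico_succ_right_eq_insert_Ico (by omega)
    by_cases hr : Rec f (N + t + 1)
    · have : M f (N + t + 1) = M f (N + t) + 1 := M_succ_of_rec hr
      rw [show N + (t+1) = N + t + 1 by omega, this, ih, hins,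
        Finset.filter_insert, if_pos hr, Finset.card_insert_of_notMem (by simp)]
      push_cast; ring
    · have : M f (N + t + 1) = M f (N + t) := M_succ_of_not_rec hr
      rw [show N + (t+1) = N + t + 1 by omega, this, ih, hins,
        Finset.filter_insert, if_neg hr]

section main

variable {f : ℕ → ℕ} {N m : ℕ} (hf : ∀ v, f (v + N) = f v)
  (hs : ∑ v ∈ Finset.range N, f v = m) (hm : m < N)

include hf hs hm in
lemma M_two_N : M f (N + N) = M f N + ((N : ℤ) - m) := by
  apply le_antisymm
  · apply M_le
    intro j hj
    rcases le_or_gt N j with h | h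
    · have : S f j = S f (j - N) + ((N:ℤ) - m) := by
        have := S_shift hf hs (j - N)
        rwa [Nat.sub_add_cancel h] at this
      have h2 : S f (j - N) ≤ M f N := le_M (by omega)
      omega
    · have h2 : S f j ≤ M f N := le_M (by omega)
      omega
  · obtain ⟨j0, hj0, hj0e⟩ := Finset.exists_mem_eq_sup' (α := ℤ)
      (s := Finset.range (N+1)) (by simp) (S f)
    have hj0N : j0 ≤ N := by simpa [Nat.lt_succ_iff] using hj0
    have : S f (j0 + N) = M f N + ((N:ℤ) - m) := by
      rw [S_shift hf hs, M, hj0e]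
    calc M f N + ((N:ℤ) - m) = S f (j0 + N) := this.symm
      _ ≤ M f (N + N) := le_M (by omega)

include hf hs hm in
lemma rec_count :
    ((Finset.Ico (N + 1) (N + N + 1)).filter (Rec f)).card = N - m := by
  have h1 := M_count f N N
  have h2 := M_two_N hf hs hm
  omega

include hf hs hm in
lemma rec_iff_window {w : ℕ} :
    Rec f w ↔ ∀ j, j < w → w ≤ j + N → S f j < S f w := by
  constructor
  · intro h j hj _; exact h j hj
  · intro h j hj
    set d := w - 1 - j with hd
    set q := d / N with hq
    have hNpos : 0 < N := by omega
    have hqd : q * N ≤ d := Nat.div_mul_le_self d N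
    have hdm : d % N < N := Nat.mod_lt _ hNpos
    have hdd : N * q + d % N = d := Nat.div_add_mod d N
    have hqd2 : q * N = N * q := Nat.mul_comm _ _
    have hj' : j + q * N < w := by omega
    have hw' : w ≤ j + q * N + N := by omega
    have := h (j + q * N) hj' hw'
    have hS : S f (j + q * N) = S f j + q * ((N:ℤ) - m) := S_shift_mul hf hs j q
    have : S f j ≤ S f (j + q * N) := by
      have hq0 : (0:ℤ) ≤ (q:ℤ) * ((N:ℤ) - m) := by
        apply mul_nonneg (by positivity); omega
      omega
    omega

end main


/-- The parking condition on sequences valued in `Fin N`. -/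
def pk (N m : ℕ) (d : Fin m → Fin N) : Prop :=
  ∀ k < N, (Finset.univ.filter fun i => k ≤ (d i).1).card + k < N

instance (N m : ℕ) (d : Fin m → Fin N) : Decidable (pk N m d) :=
  Nat.decidableBallLT _ _

/-- Number of coordinates with value `v` (mod `N`). -/
def fE {N m : ℕ} (e : Fin m → Fin N) (v : ℕ) : ℕ :=
  (Finset.univ.filter fun i => (e i).1 = v % N).card

section cyc

variable {N m : ℕ} (e : Fin m → Fin N)

lemma fE_per (v : ℕ) : fE e (v + N) = fE e v := by
  simp [fE, Nat.add_mod_right]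

lemma fE_sum (hN : 0 < N) : ∑ v ∈ Finset.range N, fE e v = m := by
  have h := Finset.card_eq_sum_card_fiberwise
    (f := fun i : Fin m => (e i).1) (s := Finset.univ) (t := Finset.range N)
    (fun i _ => Finset.mem_range.2 (e i).2)
  simp only [Finset.card_univ, Fintype.card_fin] at h
  conv_rhs => rw [h]
  apply Finset.sum_congr rfl
  intro v hv
  simp [fE, Nat.mod_eq_of_lt (Finset.mem_range.1 hv)]

lemma card_filter_shift (k a : ℕ) (ha : a < N) :
    (Finset.univ.filter fun i : Fin m => k ≤ ((e i).1 + a) % N).card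
      = ∑ v ∈ Finset.Ico k N, fE e (v + (N - a)) := by
  have hN : 0 < N := by omega
  have hmem : ∀ i ∈ (Finset.univ.filter fun i : Fin m => k ≤ ((e i).1 + a) % N),
      ((e i).1 + a) % N ∈ Finset.Ico k N := by
    intro i hi
    rw [Finset.mem_filter] at hi
    exact Finset.mem_Ico.2 ⟨hi.2, Nat.mod_lt _ hN⟩
  rw [Finset.card_eq_sum_card_fiberwise hmem]
  apply Finset.sum_congr rfl
  intro v hv
  obtain ⟨hkv, hvN⟩ := Finset.mem_Ico.1 hv
  congr 1
  ext i
  simp only [Finset.mem_filter, Finset.mem_univ, true_and, fE]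
  constructor
  · rintro ⟨hk, hg⟩
    have : (v + (N - a)) % N = (((e i).1 + a) % N + (N - a)) % N := by rw [hg]
    rw [Nat.mod_add_mod, show (e i).1 + a + (N - a) = (e i).1 + N by omega,
      Nat.add_mod_right, Nat.mod_eq_of_lt (e i).2] at this
    exact this.symm
  · intro h
    have hg : ((e i).1 + a) % N = v := by
      rw [h, Nat.mod_add_mod, show v + (N - a) + a = v + N by omega,
        Nat.add_mod_right, Nat.mod_eq_of_lt hvN]
    exact ⟨hg ▸ hkv, hg⟩

lemma S_diff (b k : ℕ) (hk : k ≤ N) :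
    S (fE e) (N + b) - S (fE e) (k + b)
      = (N : ℤ) - k - ∑ v ∈ Finset.Ico k N, (fE e (v + b) : ℤ) := by
  have h := Finset.sum_Ico_eq_sub (fun v => (fE e v : ℤ)) (by omega : k + b ≤ N + b)
  have h2 : ∑ v ∈ Finset.Ico (k + b) (N + b), (fE e v : ℤ)
      = ∑ v ∈ Finset.Ico k N, (fE e (v + b) : ℤ) := by
    rw [Finset.sum_Ico_eq_sum_range, Finset.sum_Ico_eq_sum_range]
    rw [show N + b - (k + b) = N - k by omega]
    apply Finset.sum_congr rfl
    intro i _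
    congr 2
    omega
  rw [h2] at h
  simp only [S]
  push_cast
  rw [h]
  push_cast
  ring

lemma pk_shift_iff (hm : m < N) (a : Fin N) :
    pk N m (fun i => e i + a) ↔ Rec (fE e) (N + (N - a.1)) := by
  have hN : 0 < N := by omega
  have ha : a.1 < N := a.2
  set b := N - a.1 with hb
  have hb1 : 1 ≤ b := by omega
  have hbN : b ≤ N := by omega
  have key : ∀ k, k < N →
      (((Finset.univ.filter fun i : Fin m => k ≤ ((fun i => e i + a) i).1).card + k < N)
        ↔ S (fE e) (k + b) < S (fE e) (N + b)) := by
    intro k hk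
    have hcard : (Finset.univ.filter fun i : Fin m => k ≤ (e i + a).1).card
        = ∑ v ∈ Finset.Ico k N, fE e (v + b) := by
      have hv : ∀ i : Fin m, (e i + a).1 = ((e i).1 + a.1) % N :=
        fun i => Fin.val_add _ _
      simp only [hv]
      exact card_filter_shift e k a.1 ha
    have hS := S_diff e b k (le_of_lt hk)
    have hsum : ((∑ v ∈ Finset.Ico k N, fE e (v + b) : ℕ) : ℤ)
        = ∑ v ∈ Finset.Ico k N, (fE e (v + b) : ℤ) := by push_cast; rfl
    constructor
    · intro h
      have : (Finset.univ.filter fun i : Fin m => k ≤ (e i + a).1).card + k < N := h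
      rw [hcard] at this
      have : ((∑ v ∈ Finset.Ico k N, fE e (v + b) : ℕ) : ℤ) + k < N := by exact_mod_cast this
      omega
    · intro h
      have h2 : ((∑ v ∈ Finset.Ico k N, fE e (v + b) : ℕ) : ℤ) + k < N := by omega
      have h3 : (∑ v ∈ Finset.Ico k N, fE e (v + b)) + k < N := by exact_mod_cast h2
      show (Finset.univ.filter fun i : Fin m => k ≤ (e i + a).1).card + k < N
      rw [hcard]; exact h3
  rw [rec_iff_window (fE_per e) (fE_sum e hN) hm]
  constructor
  · intro h j hj hwin
    have hbj : b ≤ j := by omega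
    have hk : j - b < N := by omega
    have := (key (j - b) hk).1 (h (j - b) hk)
    rwa [show j - b + b = j by omega] at this
  · intro h k hk
    exact (key k hk).2 (h (k + b) (by omega) (by omega))

lemma cycle (hm : m < N) :
    (Finset.univ.filter fun a : Fin N => pk N m (fun i => e i + a)).card = N - m := by
  have hN : 0 < N := by omega
  rw [← rec_count (fE_per e) (fE_sum e hN) hm]
  apply Finset.card_nbij (fun a : Fin N => N + (N - a.1))
  · intro a ha
    rw [Finset.mem_coe, Finset.mem_filter] at ha ⊢
    beta_reduce
    refine ⟨Finset.mem_Ico.2 ⟨by omega, by have := a.2; omega⟩, ?_⟩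
    exact (pk_shift_iff e hm a).1 ha.2
  · intro a1 h1 a2 h2 hEq
    simp only at hEq
    have := a1.2; have := a2.2
    exact Fin.ext (by omega)
  · intro w hw
    rw [Finset.coe_filter] at hw
    obtain ⟨hwI, hwR⟩ := hw
    rw [Finset.mem_Ico] at hwI
    refine ⟨⟨N - (w - N), by omega⟩, ?_, by simp; omega⟩
    rw [Finset.coe_filter]
    refine ⟨Finset.mem_univ _, ?_⟩
    rw [pk_shift_iff e hm]
    have : N + (N - (N - (w - N))) = w := by omega
    rw [this]
    exact hwR

end cyc

lemma count_pk (N m : ℕ) (hm : m < N) :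
    (Finset.univ.filter fun d : Fin m → Fin N => pk N m d).card * N
      = (N - m) * N ^ m := by
  haveI : NeZero N := ⟨by omega⟩
  have key : ∀ a : Fin N,
      (Finset.univ.filter fun d : Fin m → Fin N => pk N m (fun i => d i + a)).card
        = (Finset.univ.filter fun d : Fin m → Fin N => pk N m d).card := by
    intro a
    apply Finset.card_nbij (fun d => fun i => d i + a)
    · intro d hd
      rw [Finset.mem_coe, Finset.mem_filter] at hd ⊢
      exact ⟨Finset.mem_univ _, hd.2⟩
    · intro d1 _ d2 _ hEq
      funext i
      have := congrFun hEq i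
      simpa using add_right_cancel this
    · intro d hd
      rw [Finset.coe_filter] at hd ⊢
      refine ⟨fun i => d i - a, ⟨Finset.mem_univ _, ?_⟩, ?_⟩
      · have : (fun i => (d i - a) + a) = d := by
          funext i
          exact sub_add_cancel (d i) a
        rw [this]; exact hd.2
      · funext i
        exact sub_add_cancel (d i) a
  have h1 : ∑ a : Fin N, (Finset.univ.filter
      fun d : Fin m → Fin N => pk N m (fun i => d i + a)).card
      = (Finset.univ.filter fun d : Fin m → Fin N => pk N m d).card * N := by
    rw [Finset.sum_congr rfl fun a _ => key a]
    simp [Finset.card_univ, mul_comm]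
  have h2 : ∑ a : Fin N, (Finset.univ.filter
      fun d : Fin m → Fin N => pk N m (fun i => d i + a)).card
      = (N - m) * N ^ m := by
    have swap : ∑ a : Fin N, (Finset.univ.filter
        fun d : Fin m → Fin N => pk N m (fun i => d i + a)).card
        = ∑ d : Fin m → Fin N, (Finset.univ.filter
          fun a : Fin N => pk N m (fun i => d i + a)).card := by
      simp only [Finset.card_filter]
      exact Finset.sum_comm
    rw [swap]
    rw [Finset.sum_congr rfl fun d _ => cycle d hm]
    simp [Finset.card_univ, mul_comm]
  rw [← h1]
  exact h2

/-- intermediate form of the parking condition on `ℕ`-valued sequences -/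
def mid (n l m : ℕ) (c : Fin m → ℕ) : Prop :=
  (∀ i, 1 ≤ c i ∧ c i ≤ n) ∧
    ∀ k < n + 1, (Finset.univ.filter fun i => k + 1 ≤ c i).card + k < n + 1

lemma card_tail (m t : ℕ) :
    (Finset.univ.filter fun j : Fin m => t ≤ j.1).card = m - t := by
  rw [← Nat.card_Ico t m]
  apply Finset.card_nbij (fun j => j.1)
  · intro j hj
    rw [Finset.mem_coe, Finset.mem_filter] at hj
    exact Finset.mem_Ico.2 ⟨hj.2, j.2⟩
  · intro j1 _ j2 _ h
    exact Fin.ext h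
  · intro x hx
    rw [Finset.mem_coe, Finset.mem_Ico] at hx
    refine ⟨⟨x, hx.2⟩, ?_, rfl⟩
    rw [Finset.coe_filter]
    exact ⟨Finset.mem_univ _, hx.1⟩

lemma card_comp_perm {m : ℕ} (p : Fin m → Prop) [DecidablePred p]
    (σ : Equiv.Perm (Fin m)) :
    (Finset.univ.filter fun j => p (σ j)).card = (Finset.univ.filter p).card := by
  apply Finset.card_nbij (fun j => σ j)
  · intro j hj
    rw [Finset.mem_coe, Finset.mem_filter] at hj ⊢
    exact ⟨Finset.mem_univ _, hj.2⟩
  · intro j1 _ j2 _ h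
    exact σ.injective h
  · intro i hi
    rw [Finset.coe_filter] at hi
    refine ⟨σ.symm i, ?_, by simp⟩
    rw [Finset.coe_filter]
    refine ⟨Finset.mem_univ _, ?_⟩
    simpa using hi.2

lemma orig_iff_mid (n l m : ℕ) (hnm : n = l + m) (c : Fin m → ℕ) :
    (∃ σ : Equiv.Perm (Fin m),
        Monotone (c ∘ σ) ∧ ∀ i, 1 ≤ c (σ i) ∧ c (σ i) ≤ l + i.1 + 1)
      ↔ mid n l m c := by
  constructor
  · rintro ⟨σ, hmono, hb⟩
    constructor
    · intro i
      have h1 := hb (σ.symm i)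
      have h2 : σ (σ.symm i) = i := σ.apply_symm_apply i
      rw [h2] at h1
      have h3 : (σ.symm i).1 + 1 ≤ m := (σ.symm i).2
      exact ⟨h1.1, by omega⟩
    · intro k hk
      have hc : (Finset.univ.filter fun i => k + 1 ≤ c i).card
          = (Finset.univ.filter fun j => k + 1 ≤ c (σ j)).card :=
        (card_comp_perm (fun i => k + 1 ≤ c i) σ).symm
      have hsub : (Finset.univ.filter fun j => k + 1 ≤ c (σ j))
          ⊆ (Finset.univ.filter fun j : Fin m => k - l ≤ j.1) := by
        intro j hj
        rw [Finset.mem_filter] at hj ⊢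
        refine ⟨Finset.mem_univ _, ?_⟩
        have := (hb j).2
        omega
      have hcard := Finset.card_le_card hsub
      rw [card_tail] at hcard
      rw [hc]
      omega
  · rintro ⟨hbound, hcount⟩
    refine ⟨Tuple.sort c, Tuple.monotone_sort c, fun i => ⟨(hbound _).1, ?_⟩⟩
    by_contra hcon
    push_neg at hcon
    have hkN : l + i.1 + 1 < n + 1 := by have := i.2; omega
    have hsub : (Finset.univ.filter fun j : Fin m => i.1 ≤ j.1)
        ⊆ (Finset.univ.filter fun j => (l + i.1 + 1) + 1 ≤ c (Tuple.sort c j)) := by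
      intro j hj
      rw [Finset.mem_filter] at hj ⊢
      refine ⟨Finset.mem_univ _, ?_⟩
      have hmono := Tuple.monotone_sort c (show i ≤ j from hj.2)
      simp only [Function.comp_apply] at hmono
      omega
    have hcard := Finset.card_le_card hsub
    rw [card_tail m i.1,
      card_comp_perm (fun i' => (l + i.1 + 1) + 1 ≤ c i') (Tuple.sort c)] at hcard
    have := hcount (l + i.1 + 1) hkN
    have := i.2
    omega

lemma mid_iff_image (n l : ℕ) (hl : l ≤ n) :
    {c : Fin (n - l) → ℕ | mid n l (n - l) c}
      = (fun (e : Fin (n - l) → Fin (n + 1)) => (fun i => (e i).1 + 1)) ''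
        {e : Fin (n - l) → Fin (n + 1) | pk (n + 1) (n - l) e} := by
  ext c
  simp only [Set.mem_setOf_eq, Set.mem_image]
  constructor
  · rintro ⟨hbound, hcount⟩
    refine ⟨fun i => ⟨c i - 1, by have := (hbound i).2; omega⟩, ?_, ?_⟩
    · intro k hk
      have heq : (Finset.univ.filter fun i : Fin (n - l) =>
            k ≤ ((⟨c i - 1, by have := (hbound i).2; omega⟩ : Fin (n + 1)) : ℕ)).card
          = (Finset.univ.filter fun i => k + 1 ≤ c i).card := by
        congr 1
        ext i
        have := (hbound i).1
        simp only [Finset.mem_filter, Finset.mem_univ, true_and]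
        omega
      rw [heq]
      exact hcount k (by omega)
    · funext i
      show c i - 1 + 1 = c i
      have := (hbound i).1
      omega
  · rintro ⟨e, hpk, rfl⟩
    have hub : ∀ i, (e i).1 < n := by
      intro i
      have hn := hpk n (by omega)
      by_contra hcon
      push_neg at hcon
      have hmem : i ∈ Finset.univ.filter fun i : Fin (n - l) => n ≤ (e i).1 :=
        Finset.mem_filter.2 ⟨Finset.mem_univ _, hcon⟩
      have hpos := Finset.card_pos.2 ⟨i, hmem⟩
      omega
    constructor
    · intro i
      show 1 ≤ (e i).1 + 1 ∧ (e i).1 + 1 ≤ n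
      have := hub i
      omega
    · intro k hk
      show (Finset.univ.filter fun i : Fin (n - l) => k + 1 ≤ (e i).1 + 1).card
          + k < n + 1
      have heq : (Finset.univ.filter fun i : Fin (n - l) => k + 1 ≤ (e i).1 + 1).card
          = (Finset.univ.filter fun i : Fin (n - l) => k ≤ (e i).1).card := by
        congr 1
        ext i
        simp only [Finset.mem_filter, Finset.mem_univ, true_and]
        omega
      rw [heq]
      exact hpk k (by omega)

end PC

/-- Gessel–Seo (equation (4.2)): for `ℓ ≤ n`, the number of parking completions
of `t = (1, 2, …, ℓ)` in `[n]` (sequences `c ∈ [n]^{n-ℓ}` whose weakly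
increasing rearrangement satisfies `c'_i ≤ ℓ + i`) equals
`(ℓ+1)(n+1)^{n-ℓ-1}` (an integer exponent, equal to `-1` when `ℓ = n`). -/
theorem stmt11 (n l : ℕ) (hl : l ≤ n) :
    (Nat.card {c : Fin (n - l) → ℕ | ∃ σ : Equiv.Perm (Fin (n - l)),
        Monotone (c ∘ σ) ∧ ∀ i, 1 ≤ c (σ i) ∧ c (σ i) ≤ l + i.1 + 1} : ℚ) =
      ((l : ℚ) + 1) * ((n : ℚ) + 1) ^ ((n : ℤ) - l - 1) := by
  have hinj : Function.Injective
      (fun (e : Fin (n - l) → Fin (n + 1)) => (fun i => (e i).1 + 1)) := by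
    intro e1 e2 h
    funext i
    have := congrFun h i
    simp only [] at this
    exact Fin.ext (by omega)
  have hcardN : Nat.card {c : Fin (n - l) → ℕ | ∃ σ : Equiv.Perm (Fin (n - l)),
        Monotone (c ∘ σ) ∧ ∀ i, 1 ≤ c (σ i) ∧ c (σ i) ≤ l + i.1 + 1}
      = (Finset.univ.filter fun e : Fin (n - l) → Fin (n + 1) =>
          PC.pk (n + 1) (n - l) e).card := by
    have hset : {c : Fin (n - l) → ℕ | ∃ σ : Equiv.Perm (Fin (n - l)),
        Monotone (c ∘ σ) ∧ ∀ i, 1 ≤ c (σ i) ∧ c (σ i) ≤ l + i.1 + 1}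
        = {c : Fin (n - l) → ℕ | PC.mid n l (n - l) c} := by
      ext c
      exact PC.orig_iff_mid n l (n - l) (by omega) c
    rw [hset, PC.mid_iff_image n l hl, Nat.card_coe_set_eq,
      Set.ncard_image_of_injective _ hinj]
    have hfs : {e : Fin (n - l) → Fin (n + 1) | PC.pk (n + 1) (n - l) e}
        = ↑(Finset.univ.filter fun e : Fin (n - l) → Fin (n + 1) =>
            PC.pk (n + 1) (n - l) e) := by
      ext e
      simp
    rw [hfs, Set.ncard_coe_finset]
  rw [hcardN]
  clear hcardN hinj
  rcases eq_or_lt_of_le hl with hEq | hlt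
  · -- l = n : empty sequences
    subst hEq
    have h0 : l - l = 0 := by omega
    have huniv : (Finset.univ.filter fun e : Fin (l - l) → Fin (l + 1) =>
        PC.pk (l + 1) (l - l) e) = Finset.univ := by
      apply Finset.filter_true_of_mem
      intro e _
      intro k hk
      have hempty : (Finset.univ.filter fun i : Fin (l - l) => k ≤ (e i).1) = ∅ := by
        apply Finset.eq_empty_of_forall_notMem
        intro i _
        exact absurd i.2 (by omega)
      rw [hempty]
      simpa using hk
    rw [huniv]
    have hcard : (Finset.univ : Finset (Fin (l - l) → Fin (l + 1))).card = 1 := by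
      rw [Finset.card_univ, Fintype.card_fun]
      simp [h0]
    rw [hcard]
    have hexp : (l : ℤ) - l - 1 = -1 := by omega
    rw [hexp]
    have hne : ((l : ℚ) + 1) ≠ 0 := by positivity
    rw [zpow_neg_one]
    field_simp
    norm_num
  · -- l < n
    have hm : n - l < n + 1 := by omega
    have hK := PC.count_pk (n + 1) (n - l) hm
    have hNm : n + 1 - (n - l) = l + 1 := by omega
    rw [hNm] at hK
    have hpow : (n + 1) ^ (n - l) = (n + 1) ^ (n - l - 1) * (n + 1) := by
      rw [← pow_succ]
      congr 1
      omega
    rw [hpow] at hK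
    have hKval : (Finset.univ.filter fun e : Fin (n - l) → Fin (n + 1) =>
        PC.pk (n + 1) (n - l) e).card = (l + 1) * (n + 1) ^ (n - l - 1) := by
      have := hK
      apply Nat.eq_of_mul_eq_mul_right (show 0 < n + 1 by omega)
      rw [this]
      ring
    rw [hKval]
    have hexp : (n : ℤ) - l - 1 = ((n - l - 1 : ℕ) : ℤ) := by omega
    rw [hexp, zpow_natCast]
    push_cast
    ring
end

section
/- The number of increasing parking completions of t in [n] equals det[ binom(u_{n−m+1−i}, i−j+1) ]_{i,j=1}^{n−m}, where u_1 < ... < u_{n−m} are the elements of [n] not in t. -/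
open Finset Matrix

/-- The set of increasing parking completions with bound vector `u`. -/
private def pSet {N : ℕ} (u : Fin N → ℕ) : Set (Fin N → ℕ) :=
  {c | Monotone c ∧ ∀ i, 1 ≤ c i ∧ c i ≤ u i}

/-- A row pattern: shift `s`, value `v`. -/
private def rowP (N s v : ℕ) : Fin N → ℤ :=
  fun j => if j.1 ≤ s then ((v.choose (s - j.1)) : ℤ) else 0

/-- The binomial matrix. -/
private def pMat {N : ℕ} (u : Fin N → ℕ) : Matrix (Fin N) (Fin N) ℤ :=
  Matrix.of fun i j => if j.1 ≤ i.1 + 1 then ((u i.rev).choose (i.1 + 1 - j.1) : ℤ) else 0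

private lemma pascal (N s v : ℕ) :
    rowP N (s + 1) (v + 1) = rowP N (s + 1) v + rowP N s v := by
  funext j
  simp only [rowP, Pi.add_apply]
  by_cases h1 : j.1 ≤ s
  · have h2 : j.1 ≤ s + 1 := by omega
    rw [if_pos h2, if_pos h2, if_pos h1]
    have h3 : s + 1 - j.1 = (s - j.1) + 1 := by omega
    rw [h3, Nat.choose_succ_succ]
    push_cast
    ring
  · by_cases h2 : j.1 = s + 1
    · rw [if_pos (le_of_eq h2), if_pos (le_of_eq h2), if_neg h1]
      have h3 : s + 1 - j.1 = 0 := by omega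
      rw [h3]
      simp
    · have h3 : ¬ j.1 ≤ s + 1 := by omega
      rw [if_neg h3, if_neg h3, if_neg h1]
      ring

private lemma pMat_row_eq {N : ℕ} (u : Fin N → ℕ) (i : Fin N) :
    pMat u i = rowP N (i.1 + 1) (u i.rev) := rfl

private lemma pMat_update {N : ℕ} (u : Fin N → ℕ) (p : Fin N) (v : ℕ) :
    pMat u = Matrix.updateRow (pMat (Function.update u p v)) p.rev
      (rowP N (p.rev.1 + 1) (u p)) := by
  funext i j
  by_cases hi : i = p.rev
  · subst hi
    rw [Matrix.updateRow_self]
    simp [pMat, rowP, Fin.rev_rev]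
  · rw [Matrix.updateRow_ne hi]
    have hrev : i.rev ≠ p := by
      intro h
      exact hi (by rw [← h, Fin.rev_rev])
    simp [pMat, Function.update_of_ne hrev]

private lemma det_clamp {N : ℕ} (w : Fin N → ℕ) (p q : Fin N) (hq : q.1 = p.1 + 1)
    (hw : w p = w q + 1) :
    (pMat w).det = (pMat (Function.update w p (w q))).det := by
  have hpq : p ≠ q := by
    intro h; rw [h] at hq; omega
  set B := pMat (Function.update w p (w q)) with hB
  have h1 : pMat w = Matrix.updateRow B p.rev (rowP N (p.rev.1 + 1) (w q + 1)) := by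
    rw [← hw]; exact pMat_update w p (w q)
  have hr : (p.rev.1) = (q.rev.1) + 1 := by
    have hq2 := q.2
    have hp2 := p.2
    simp only [Fin.val_rev]
    omega
  rw [h1, pascal, Matrix.det_updateRow_add]
  have e1 : Matrix.updateRow B p.rev (rowP N (p.rev.1 + 1) (w q)) = B := by
    have hrow : rowP N (p.rev.1 + 1) (w q) = B p.rev := by
      have harg : Function.update w p (w q) p.rev.rev = w q := by
        rw [Fin.rev_rev, Function.update_self]
      funext j
      simp [hB, pMat, rowP, harg]
    rw [hrow, Matrix.updateRow_eq_self]
  have hne : p.rev ≠ q.rev := by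
    intro h
    exact hpq (by rw [← Fin.rev_rev p, h, Fin.rev_rev])
  have e2 : (Matrix.updateRow B p.rev (rowP N (p.rev.1) (w q))).det = 0 := by
    apply Matrix.det_zero_of_row_eq hne
    rw [Matrix.updateRow_self, Matrix.updateRow_ne (Ne.symm hne)]
    have : B q.rev = rowP N (q.rev.1 + 1) (w q) := by
      have hqp : q ≠ p := Ne.symm hpq
      have harg : Function.update w p (w q) q.rev.rev = w q := by
        rw [Fin.rev_rev, Function.update_of_ne hqp]
      funext j
      simp [hB, pMat, rowP, harg, Function.update_of_ne hqp]
    rw [this, ← hr]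
  rw [e1, e2, add_zero]

private lemma det_main {k v : ℕ} (u : Fin (k + 1) → ℕ) (huv : u (Fin.last k) = v + 1) :
    (pMat u).det = (pMat (Function.update u (Fin.last k) v)).det
      + (pMat (fun i : Fin k => u i.castSucc)).det := by
  set B := pMat (Function.update u (Fin.last k) v) with hB
  have hrev : (Fin.last k).rev = (0 : Fin (k + 1)) := by
    apply Fin.ext
    simp [Fin.val_rev]
  have h1 : pMat u = Matrix.updateRow B 0 (rowP (k + 1) (0 + 1) (v + 1)) := by
    have h := pMat_update u (Fin.last k) v
    rw [hrev, huv] at h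
    exact h
  rw [h1, pascal, Matrix.det_updateRow_add]
  have e1 : Matrix.updateRow B 0 (rowP (k + 1) (0 + 1) v) = B := by
    have hrow : rowP (k + 1) (0 + 1) v = B 0 := by
      have h0 : (0 : Fin (k+1)).rev = Fin.last k := by
        apply Fin.ext; simp [Fin.val_rev]
      have harg : Function.update u (Fin.last k) v ((0 : Fin (k+1)).rev) = v := by
        rw [h0, Function.update_self]
      funext j
      simp [hB, pMat, rowP, harg]
    rw [hrow, Matrix.updateRow_eq_self]
  rw [e1]
  congr 1
  -- second term: expand along the first row which is e₀
  set M := Matrix.updateRow B 0 (rowP (k + 1) 0 v) with hM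
  have hM0 : ∀ j : Fin (k + 1), M 0 j = if j = 0 then 1 else 0 := by
    intro j
    rw [hM, Matrix.updateRow_self]
    simp only [rowP, Nat.le_zero]
    by_cases hj : j = 0
    · subst hj; simp
    · rw [if_neg (fun h => hj (Fin.ext (by simp [h]))), if_neg hj]
  rw [Matrix.det_succ_row_zero]
  rw [Finset.sum_eq_single_of_mem 0 (Finset.mem_univ _) (by
    intro j _ hjne
    rw [hM0, if_neg hjne]
    ring)]
  rw [hM0, if_pos rfl]
  simp only [Fin.val_zero, pow_zero, one_mul, Fin.succAbove_zero]
  congr 1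
  funext i j
  have hine : (i.succ : Fin (k + 1)) ≠ 0 := Fin.succ_ne_zero i
  have hsub : M.submatrix Fin.succ Fin.succ i j = B i.succ j.succ := by
    rw [Matrix.submatrix_apply, hM, Matrix.updateRow_ne hine]
  rw [hsub]
  have hval : (i.succ : Fin (k + 1)).rev = (i.rev.castSucc : Fin (k + 1)) := by
    apply Fin.ext
    have := i.2
    simp only [Fin.val_rev, Fin.val_succ, Fin.coe_castSucc]
    omega
  have hlast : (i.rev.castSucc : Fin (k + 1)) ≠ Fin.last k := by
    intro h
    have := congrArg Fin.val h
    simp [Fin.val_rev] at this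
    omega
  show (if (j.succ.1 ≤ i.succ.1 + 1) then
      ((Function.update u (Fin.last k) v (i.succ.rev)).choose (i.succ.1 + 1 - j.succ.1) : ℤ)
      else 0)
    = (if j.1 ≤ i.1 + 1 then ((u (Fin.rev i).castSucc).choose (i.1 + 1 - j.1) : ℤ) else 0)
  rw [hval, Function.update_of_ne hlast]
  have hc : (j.succ.1 ≤ i.succ.1 + 1) ↔ (j.1 ≤ i.1 + 1) := by
    simp only [Fin.val_succ]
    omega
  have hd : i.succ.1 + 1 - j.succ.1 = i.1 + 1 - j.1 := by
    simp only [Fin.val_succ]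
    omega
  rw [hd, if_congr hc rfl rfl]

private lemma det_zero_case {k : ℕ} (u : Fin (k + 1) → ℕ) (hu : Monotone u)
    (huv : u (Fin.last k) = 0) : (pMat u).det = 0 := by
  apply Matrix.det_eq_zero_of_column_eq_zero 0
  intro i
  have h1 : u i.rev ≤ 0 := by
    rw [← huv]; exact hu (Fin.le_last _)
  have h2 : u i.rev = 0 := by omega
  simp [pMat, h2, Nat.choose_eq_zero_of_lt (Nat.succ_pos i.1)]

private lemma pSet_finite {N : ℕ} (u : Fin N → ℕ) : (pSet u).Finite := by
  apply Set.Finite.subset (Set.finite_Icc (fun _ : Fin N => (1 : ℕ)) u)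
  intro c hc
  exact Set.mem_Icc.2 ⟨fun i => (hc.2 i).1, fun i => (hc.2 i).2⟩

private lemma pSet_clamp {N : ℕ} (w : Fin N → ℕ) (p q : Fin N) (hq : q.1 = p.1 + 1)
    (hw : w q ≤ w p) : pSet w = pSet (Function.update w p (w q)) := by
  have hpq : p ≤ q := by rw [Fin.le_def]; omega
  ext c
  constructor
  · rintro ⟨hc, hb⟩
    refine ⟨hc, fun i => ?_⟩
    rcases eq_or_ne i p with rfl | h
    · rw [Function.update_self]
      exact ⟨(hb i).1, le_trans (hc hpq) (hb q).2⟩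
    · rw [Function.update_of_ne h]; exact hb i
  · rintro ⟨hc, hb⟩
    refine ⟨hc, fun i => ?_⟩
    rcases eq_or_ne i p with rfl | h
    · have h2 := hb i
      rw [Function.update_self] at h2
      exact ⟨h2.1, le_trans h2.2 hw⟩
    · have h2 := hb i
      rwa [Function.update_of_ne h] at h2
  
private lemma count_zero_case {k : ℕ} (u : Fin (k + 1) → ℕ)
    (huv : u (Fin.last k) = 0) : (pSet u).ncard = 0 := by
  have : pSet u = ∅ := by
    rw [Set.eq_empty_iff_forall_notMem]
    rintro c ⟨_, hb⟩
    have h1 := (hb (Fin.last k)).1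
    have h2 := (hb (Fin.last k)).2
    rw [huv] at h2
    omega
  rw [this, Set.ncard_empty]

private lemma monotone_snoc {k : ℕ} {d : Fin k → ℕ} (hd : Monotone d) (x : ℕ)
    (hdx : ∀ i, d i ≤ x) : Monotone (Fin.snoc d x : Fin (k + 1) → ℕ) := by
  intro a b hab
  rcases Fin.eq_castSucc_or_eq_last b with ⟨b', rfl⟩ | rfl
  · rcases Fin.eq_castSucc_or_eq_last a with ⟨a', rfl⟩ | rfl
    · rw [Fin.snoc_castSucc, Fin.snoc_castSucc]
      exact hd (by rwa [Fin.castSucc_le_castSucc_iff] at hab)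
    · exact absurd (lt_of_le_of_lt hab (Fin.castSucc_lt_last b')) (lt_irrefl _)
  · rw [Fin.snoc_last]
    rcases Fin.eq_castSucc_or_eq_last a with ⟨a', rfl⟩ | rfl
    · rw [Fin.snoc_castSucc]; exact hdx a'
    · rw [Fin.snoc_last]

private lemma count_main {k v : ℕ} (u : Fin (k + 1) → ℕ) (hu : Monotone u)
    (huv : u (Fin.last k) = v + 1) :
    (pSet u).ncard = (pSet (Function.update u (Fin.last k) v)).ncard
      + (pSet (fun i : Fin k => u i.castSucc)).ncard := by
  classical
  set A := pSet (Function.update u (Fin.last k) v) with hA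
  set B := (fun d : Fin k → ℕ => (Fin.snoc d (v + 1) : Fin (k + 1) → ℕ)) ''
    pSet (fun i : Fin k => u i.castSucc) with hBdef
  have hsplit : pSet u = A ∪ B := by
    ext c
    constructor
    · rintro ⟨hc, hb⟩
      by_cases hlast : c (Fin.last k) ≤ v
      · left
        refine ⟨hc, fun i => ?_⟩
        rcases eq_or_ne i (Fin.last k) with rfl | h
        · rw [Function.update_self]; exact ⟨(hb (Fin.last k)).1, hlast⟩
        · rw [Function.update_of_ne h]; exact hb i
      · right
        have hcl : c (Fin.last k) = v + 1 := by
          have h2 := (hb (Fin.last k)).2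
          rw [huv] at h2
          omega
        refine ⟨Fin.init c, ⟨?_, fun i => ?_⟩, ?_⟩
        · exact fun a b hab => hc (Fin.castSucc_le_castSucc_iff.2 hab)
        · exact hb i.castSucc
        · rw [← hcl]; exact Fin.snoc_init_self c
    · rintro (⟨hc, hb⟩ | ⟨d, ⟨hd, hdb⟩, rfl⟩)
      · refine ⟨hc, fun i => ?_⟩
        rcases eq_or_ne i (Fin.last k) with rfl | h
        · have h2 := hb (Fin.last k)
          rw [Function.update_self] at h2
          rw [huv]
          exact ⟨h2.1, by omega⟩
        · have h2 := hb i
          rwa [Function.update_of_ne h] at h2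
      · refine ⟨?_, ?_⟩
        · refine monotone_snoc hd (v + 1) (fun i => le_trans (hdb i).2 ?_)
          rw [← huv]
          exact hu (Fin.le_last _)
        · intro i
          rcases Fin.eq_castSucc_or_eq_last i with ⟨i', rfl⟩ | rfl
          · simp only [Fin.snoc_castSucc]
            exact hdb i'
          · simp only [Fin.snoc_last, huv]
            exact ⟨by omega, le_rfl⟩
  have hdisj : Disjoint A B := by
    rw [Set.disjoint_left]
    rintro c ⟨hc, hb⟩ ⟨d, hd, rfl⟩
    have h1 := (hb (Fin.last k)).2
    simp only [Function.update_self, Fin.snoc_last] at h1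
    omega
  have hinj : Function.Injective (fun d : Fin k → ℕ => (Fin.snoc d (v + 1) : Fin (k + 1) → ℕ)) := by
    intro a b hab
    have h2 := congrArg Fin.init hab
    rwa [Fin.init_snoc, Fin.init_snoc] at h2
  rw [hsplit, Set.ncard_union_eq hdisj (pSet_finite _) (Set.Finite.image _ (pSet_finite _)),
    hBdef, Set.ncard_image_of_injective _ hinj]

private lemma chain {α : Type*} {k v : ℕ} (u : Fin (k + 1) → ℕ) (hu : Monotone u)
    (huv : u (Fin.last k) = v + 1)
    (G : (Fin (k + 1) → ℕ) → α)
    (hG : ∀ (w : Fin (k + 1) → ℕ) (p q : Fin (k + 1)), q.1 = p.1 + 1 → w p = w q + 1 →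
      G w = G (Function.update w p (w q))) :
    G (Function.update u (Fin.last k) v) = G (fun i => min (u i) v) := by
  classical
  set W : ℕ → Fin (k + 1) → ℕ := fun j i => if k ≤ i.1 + j then min (u i) v else u i with hW
  have h0 : W 0 = Function.update u (Fin.last k) v := by
    funext i
    rcases eq_or_ne i (Fin.last k) with rfl | h
    · have hc : k ≤ (Fin.last k).1 + 0 := by simp
      simp only [hW, if_pos hc, Function.update_self, huv]
      omega
    · have hik : i.1 < k := by
        have := i.2
        have hne : i.1 ≠ k := fun hh => h (Fin.ext (by simp [hh]))
        omega
      have hc : ¬ k ≤ i.1 + 0 := by omega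
      simp only [hW, if_neg hc, Function.update_of_ne h]
  have hk : W k = fun i => min (u i) v := by
    funext i
    simp only [hW, if_pos (Nat.le_add_left k i.1)]
  have hstep : ∀ j, G (W j) = G (W (j + 1)) := by
    intro j
    rcases Nat.lt_or_ge j k with hj | hj
    · have hpk : k - 1 - j < k + 1 := by omega
      have hqk : k - j < k + 1 := by omega
      set p : Fin (k + 1) := ⟨k - 1 - j, hpk⟩ with hp
      set q : Fin (k + 1) := ⟨k - j, hqk⟩ with hq
      have hpv : p.1 = k - 1 - j := rfl
      have hqv : q.1 = k - j := rfl
      by_cases hup : u p = v + 1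
      · have hq1 : q.1 = p.1 + 1 := by rw [hpv, hqv]; omega
        have hWq : W j q = v := by
          have h1 : k ≤ q.1 + j := by rw [hqv]; omega
          have h2 : v + 1 ≤ u q := by
            rw [← hup]
            exact hu (show p ≤ q by rw [Fin.le_def, hpv, hqv]; omega)
          simp only [hW, if_pos h1]
          omega
        have hWp : W j p = u p := by
          have h1 : ¬ k ≤ p.1 + j := by rw [hpv]; omega
          simp only [hW, if_neg h1]
        have hGstep := hG (W j) p q hq1 (by rw [hWp, hWq, hup])
        rw [hGstep]
        congr 1
        funext i
        rcases eq_or_ne i p with rfl | h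
        · rw [Function.update_self, hWq]
          have hc : k ≤ p.1 + (j + 1) := by rw [hpv]; omega
          simp only [hW, if_pos hc, hup]
          omega
        · rw [Function.update_of_ne h]
          have hne : i.1 ≠ p.1 := fun hh => h (Fin.ext hh)
          rw [hpv] at hne
          have hiff : (k ≤ i.1 + j) ↔ (k ≤ i.1 + (j + 1)) := by omega
          simp only [hW]
          rw [if_congr hiff rfl rfl]
      · have hupv : u p ≤ v := by
          have h2 := hu (Fin.le_last p)
          rw [huv] at h2
          omega
        congr 1
        funext i
        by_cases hip : i.1 = k - 1 - j
        · have h1 : ¬ k ≤ i.1 + j := by omega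
          have h2 : k ≤ i.1 + (j + 1) := by omega
          have hie : i = p := Fin.ext (by rw [hpv]; exact hip)
          have h3 : u i ≤ v := by rw [hie]; exact hupv
          simp only [hW, if_neg h1, if_pos h2]
          omega
        · have hiff : (k ≤ i.1 + j) ↔ (k ≤ i.1 + (j + 1)) := by omega
          simp only [hW]
          rw [if_congr hiff rfl rfl]
    · congr 1
      funext i
      have h1 : k ≤ i.1 + j := le_trans hj (Nat.le_add_left _ _)
      have h2 : k ≤ i.1 + (j + 1) := by omega
      simp only [hW, if_pos h1, if_pos h2]
  have hiter : ∀ d j, G (W j) = G (W (j + d)) := by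
    intro d
    induction d with
    | zero => intro j; rfl
    | succ d ih =>
      intro j
      have h2 : j + 1 + d = j + (d + 1) := by omega
      rw [hstep j, ih (j + 1), h2]
  have hfin := hiter k 0
  rw [Nat.zero_add] at hfin
  rw [← h0, ← hk]
  exact hfin

private lemma key : ∀ (S : ℕ) {N : ℕ} (u : Fin N → ℕ), Monotone u → (∑ i, u i) ≤ S →
    ((pSet u).ncard : ℤ) = (pMat u).det := by
  have base0 : ∀ (u : Fin 0 → ℕ), ((pSet u).ncard : ℤ) = (pMat u).det := by
    intro u
    have h1 : pSet u = Set.univ := by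
      apply Set.eq_univ_of_forall
      intro c
      exact ⟨fun a _ _ => a.elim0, fun i => i.elim0⟩
    rw [h1, Set.ncard_univ, Matrix.det_fin_zero, Nat.card_unique, Nat.cast_one]
  intro S
  induction S with
  | zero =>
    intro N u hu hS
    cases N with
    | zero => exact base0 u
    | succ k =>
      have hz : u (Fin.last k) = 0 := by
        have hsz : ∑ i, u i = 0 := by omega
        exact (Finset.sum_eq_zero_iff.1 hsz) _ (Finset.mem_univ _)
      rw [count_zero_case u hz, det_zero_case u hu hz, Nat.cast_zero]
  | succ S ih =>
    intro N u hu hS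
    cases N with
    | zero => exact base0 u
    | succ k =>
      rcases hv : u (Fin.last k) with _ | v
      · rw [count_zero_case u hv, det_zero_case u hu hv, Nat.cast_zero]
      · have hcount := count_main u hu hv
        have hdet := det_main u hv
        have hchain_c : (pSet (Function.update u (Fin.last k) v)).ncard
            = (pSet (fun i => min (u i) v)).ncard :=
          chain u hu hv (fun w => (pSet w).ncard)
            (fun w p q hq hw => congrArg Set.ncard (pSet_clamp w p q hq (by omega)))
        have hchain_d : (pMat (Function.update u (Fin.last k) v)).det
            = (pMat (fun i => min (u i) v)).det :=
          chain u hu hv (fun w => (pMat w).det)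
            (fun w p q hq hw => det_clamp w p q hq hw)
        have hm : Monotone (fun i => min (u i) v) := by
          intro a b hab
          have := hu hab
          simp only
          omega
        have hmsum : (∑ i, min (u i) v) ≤ S := by
          have h1 : (∑ i, min (u i) v) < ∑ i, u i := by
            apply Finset.sum_lt_sum (fun i _ => min_le_left _ _)
            exact ⟨Fin.last k, Finset.mem_univ _, by rw [hv]; omega⟩
          omega
        have hdrop : Monotone (fun i : Fin k => u i.castSucc) :=
          fun a b hab => hu (Fin.castSucc_le_castSucc_iff.2 hab)
        have hdropsum : (∑ i : Fin k, u i.castSucc) ≤ S := by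
          have h2 := Fin.sum_univ_castSucc u
          rw [hv] at h2
          omega
        have e1 := ih _ hm hmsum
        have e2 := ih _ hdrop hdropsum
        rw [hcount, hdet, hchain_c, hchain_d]
        push_cast
        rw [e1, e2]

/-- Proposition 2.3 (Lindström–Gessel–Viennot): the number of increasing
parking completions of `t` in `[n]` equals the determinant of the
`(n-m) × (n-m)` matrix whose `(i,j)` entry (1-indexed) is
`binom(u_{n-m+1-i}, i-j+1)`, with the convention that the binomial vanishes
for negative lower index.  Here `u` is the increasing enumeration of
`[n] \ t`, and `Fin.rev i` encodes the index `n - m + 1 - i`. -/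
theorem stmt13 (n m : ℕ) (t : Fin m → ℕ) (u : Fin (n - m) → ℕ)
    (ht : StrictMono t) (htm : ∀ i, t i ∈ Finset.Icc 1 n)
    (hu : StrictMono u) (hum : ∀ j, u j ∈ Finset.Icc 1 n)
    (hcompl : ∀ x ∈ Finset.Icc 1 n, (∃ i, t i = x) ↔ ¬ ∃ j, u j = x) :
    (Nat.card {c : Fin (n - m) → ℕ | Monotone c ∧ ∀ i, 1 ≤ c i ∧ c i ≤ u i} : ℤ) =
      Matrix.det (Matrix.of fun i j : Fin (n - m) =>
        if j.1 ≤ i.1 + 1 then ((u i.rev).choose (i.1 + 1 - j.1) : ℤ) else 0) := by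
  have h := key (∑ i, u i) u hu.monotone le_rfl
  rw [Nat.card_coe_set_eq]
  exact h
end
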